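/- arXiv:1509.06383 — 4 statements merged into one kernel-verified Lean document; each statement's English description precedes it below -/
import Mathlib

section
/- Let μ > 0, α ∈ ℂ and j ∈ ℤ. Then ∫_{W'_μ} |F_{α,j}(z₁,z₂)|² dV < ∞ if and only if Re α > -1. -/
open MeasureTheory Real

noncomputable section

/-- The truncated worm domain `W'_μ`. -/
def wormT (μ : ℝ) : Set (ℂ × ℂ) :=
  {z : ℂ × ℂ | z.2 ≠ 0 ∧
    ‖z.1 - Complex.exp (Complex.I * (Real.log (‖z.2‖ ^ 2) : ℂ))‖ < 1 ∧
    |Real.log (‖z.2‖ ^ 2)| < μ}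

/-- `E_η(z) = (z₁ e^{-i log|z₂|²})^η e^{iη log|z₂|²}`, principal branch of the power. -/
def Efun (η : ℂ) (z : ℂ × ℂ) : ℂ :=
  (z.1 * Complex.exp (-Complex.I * (Real.log (‖z.2‖ ^ 2) : ℂ))) ^ η *
    Complex.exp (Complex.I * η * (Real.log (‖z.2‖ ^ 2) : ℂ))

/-- `F_{α,j}(z) = E_α(z) z₂^j`. -/
def Ffun (α : ℂ) (j : ℤ) (z : ℂ × ℂ) : ℂ := Efun α z * z.2 ^ j

end

section Aux

open Set Metric

/-- antitonicity of `rpow` in the base for nonpositive exponents -/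
private lemma ennrpow_anti {x y : ENNReal} (h : x ≤ y) {p : ℝ} (hp : p ≤ 0) :
    y ^ p ≤ x ^ p := by
  have h1 : x ^ p = (x ^ (-p))⁻¹ := by rw [← ENNReal.rpow_neg, neg_neg]
  have h2 : y ^ p = (y ^ (-p))⁻¹ := by rw [← ENNReal.rpow_neg, neg_neg]
  rw [h1, h2]
  exact ENNReal.inv_le_inv.mpr (ENNReal.rpow_le_rpow h (neg_nonneg.mpr hp))

private lemma prod_lint (f : ℂ → ENNReal) (hf : Measurable f) (S T : Set ℂ) :
    ∫⁻ z in S ×ˢ T, f z.1 = (∫⁻ x in S, f x) * volume T := by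
  rw [Measure.volume_eq_prod, ← Measure.prod_restrict]
  have h := lintegral_prod_mul (μ := volume.restrict S) (ν := volume.restrict T)
    hf.aemeasurable (aemeasurable_const (b := (1 : ENNReal)))
  simpa using h

private lemma meas_g (s : ℝ) : Measurable fun x : ℂ => (‖x‖₊ : ENNReal) ^ s := by
  fun_prop

/-- Finiteness of the dyadic model integral on the ball. -/
private lemma finite_ball {s : ℝ} (hs : -2 < s) :
    ∫⁻ z : ℂ in Metric.ball 0 2, (‖z‖₊ : ENNReal) ^ s < ⊤ := by
  set U : ℕ → Set ℂ := fun k => {z : ℂ | (1/2:ℝ)^k < ‖z‖ ∧ ‖z‖ ≤ 2 * (1/2)^k} with hU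
  have hcover : Metric.ball (0:ℂ) 2 ⊆ {0} ∪ ⋃ k, U k := by
    intro z hz
    rcases eq_or_ne z 0 with rfl | hz0
    · exact Or.inl rfl
    right
    have hz2 : ‖z‖ < 2 := by simpa using hz
    have hzpos : 0 < ‖z‖ := norm_pos_iff.mpr hz0
    have hex : ∃ k : ℕ, (1/2:ℝ)^k < ‖z‖ :=
      exists_pow_lt_of_lt_one hzpos (by norm_num)
    refine Set.mem_iUnion.2 ⟨Nat.find hex, Nat.find_spec hex, ?_⟩
    rcases Nat.eq_zero_or_pos (Nat.find hex) with h0 | h0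
    · rw [h0]; simpa using hz2.le
    · have := Nat.find_min hex (Nat.sub_lt h0 one_pos)
      push_neg at this
      calc ‖z‖ ≤ (1/2:ℝ) ^ (Nat.find hex - 1) := this
        _ = 2 * (1/2) ^ (Nat.find hex) := by
            conv_rhs => rw [show Nat.find hex = (Nat.find hex - 1) + 1 from
              (Nat.succ_pred_eq_of_pos h0).symm]
            rw [pow_succ]; ring
  set M : ENNReal := max ((2:ENNReal) ^ s) 1 with hM
  have h2s : (2:ENNReal) ^ s ≠ ⊤ := by
    rcases le_or_gt 0 s with h | h
    · exact ENNReal.rpow_ne_top_of_nonneg h (by norm_num)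
    · exact ne_top_of_le_ne_top ENNReal.one_ne_top
        (ENNReal.rpow_lt_one_of_one_lt_of_neg (by norm_num) h).le
  have hMne : M ≠ ⊤ := by
    rw [hM]; exact (max_lt h2s.lt_top ENNReal.one_lt_top).ne
  have hbound : ∀ k : ℕ, ∀ z ∈ U k,
      (‖z‖₊ : ENNReal) ^ s ≤ M * (ENNReal.ofReal ((1/2:ℝ)^k)) ^ s := by
    intro k z hzk
    obtain ⟨hlo, hhi⟩ := hzk
    have hrpos : (0:ℝ) < (1/2:ℝ)^k := by positivity
    rcases le_or_gt 0 s with h | h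
    · have h1 : (‖z‖₊ : ENNReal) ≤ (2:ENNReal) * ENNReal.ofReal ((1/2:ℝ)^k) := by
        rw [← ENNReal.ofReal_ofNat, ← ENNReal.ofReal_mul (by norm_num),
          ← enorm_eq_nnnorm, ← ofReal_norm]
        exact ENNReal.ofReal_le_ofReal hhi
      calc (‖z‖₊ : ENNReal) ^ s ≤ ((2:ENNReal) * ENNReal.ofReal ((1/2:ℝ)^k)) ^ s :=
            ENNReal.rpow_le_rpow h1 h
        _ = (2:ENNReal)^s * (ENNReal.ofReal ((1/2:ℝ)^k)) ^ s :=
            ENNReal.mul_rpow_of_nonneg _ _ h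
        _ ≤ M * (ENNReal.ofReal ((1/2:ℝ)^k)) ^ s := by
            exact mul_le_mul_left (le_max_left _ _) _
    · have h1 : ENNReal.ofReal ((1/2:ℝ)^k) ≤ (‖z‖₊ : ENNReal) := by
        rw [← enorm_eq_nnnorm, ← ofReal_norm]
        exact ENNReal.ofReal_le_ofReal hlo.le
      calc (‖z‖₊ : ENNReal) ^ s ≤ (ENNReal.ofReal ((1/2:ℝ)^k)) ^ s :=
            ennrpow_anti h1 h.le
        _ ≤ M * (ENNReal.ofReal ((1/2:ℝ)^k)) ^ s := by
            conv_lhs => rw [← one_mul ((ENNReal.ofReal ((1/2:ℝ)^k)) ^ s)]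
            exact mul_le_mul_left (le_max_right _ _) _
  have hvol : ∀ k : ℕ, volume (U k) ≤
      ENNReal.ofReal (4 * (1/2:ℝ)^k) ^ 2 * (NNReal.pi : ENNReal) := by
    intro k
    have : U k ⊆ Metric.ball (0:ℂ) (4 * (1/2:ℝ)^k) := by
      intro z hzk
      have := hzk.2
      have hrpos : (0:ℝ) < (1/2:ℝ)^k := by positivity
      simp only [mem_ball, dist_zero_right]
      linarith
    calc volume (U k) ≤ volume (Metric.ball (0:ℂ) (4 * (1/2:ℝ)^k)) := measure_mono this
      _ = ENNReal.ofReal (4 * (1/2:ℝ)^k) ^ 2 * (NNReal.pi : ENNReal) :=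
          Complex.volume_ball 0 _
  have hterm : ∀ k : ℕ, (∫⁻ z in U k, (‖z‖₊ : ENNReal) ^ s) ≤
      (M * ENNReal.ofReal 16 * (NNReal.pi : ENNReal)) *
        (ENNReal.ofReal ((1/2:ℝ) ^ (s+2))) ^ k := by
    intro k
    have hrpos : (0:ℝ) < (1/2:ℝ)^k := by positivity
    have hq0 : ENNReal.ofReal ((1/2:ℝ)^k) ≠ 0 := by
      simp [ENNReal.ofReal_eq_zero, not_le, hrpos]
    have hqt : ENNReal.ofReal ((1/2:ℝ)^k) ≠ ⊤ := ENNReal.ofReal_ne_top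
    calc (∫⁻ z in U k, (‖z‖₊ : ENNReal) ^ s)
        ≤ ∫⁻ _ in U k, M * (ENNReal.ofReal ((1/2:ℝ)^k)) ^ s :=
          setLIntegral_mono measurable_const (hbound k)
      _ = M * (ENNReal.ofReal ((1/2:ℝ)^k)) ^ s * volume (U k) := setLIntegral_const _ _
      _ ≤ M * (ENNReal.ofReal ((1/2:ℝ)^k)) ^ s *
            (ENNReal.ofReal (4 * (1/2:ℝ)^k) ^ 2 * (NNReal.pi : ENNReal)) :=
          mul_le_mul_right (hvol k) _
      _ = (M * ENNReal.ofReal 16 * (NNReal.pi : ENNReal)) *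
            ((ENNReal.ofReal ((1/2:ℝ)^k)) ^ s * (ENNReal.ofReal ((1/2:ℝ)^k)) ^ (2:ℝ)) := by
          rw [ENNReal.ofReal_mul (by norm_num), mul_pow,
            show (ENNReal.ofReal 4) ^ 2 = ENNReal.ofReal 16 by
              rw [← ENNReal.ofReal_pow (by norm_num)]; norm_num,
            show (ENNReal.ofReal ((1/2:ℝ)^k)) ^ (2:ℝ)
                = (ENNReal.ofReal ((1/2:ℝ)^k)) ^ (2:ℕ) by
              rw [← ENNReal.rpow_natCast]; norm_num]
          ring
      _ = (M * ENNReal.ofReal 16 * (NNReal.pi : ENNReal)) *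
            (ENNReal.ofReal ((1/2:ℝ) ^ (s+2))) ^ k := by
          congr 1
          have hreal : (((1/2:ℝ)^k) ^ (s+2)) = (((1/2:ℝ) ^ (s+2)) ^ k) := by
            rw [← Real.rpow_natCast (1/2:ℝ) k, ← Real.rpow_mul (by norm_num),
              ← Real.rpow_natCast ((1/2:ℝ) ^ (s+2)) k, ← Real.rpow_mul (by norm_num)]
            congr 1; ring
          rw [← ENNReal.rpow_add _ _ hq0 hqt, ENNReal.ofReal_rpow_of_pos hrpos, hreal,
            ENNReal.ofReal_pow (by positivity : (0:ℝ) ≤ (1/2:ℝ) ^ (s+2))]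
  have hsum : (∑' k : ℕ, (ENNReal.ofReal ((1/2:ℝ) ^ (s+2))) ^ k) < ⊤ := by
    rw [ENNReal.tsum_geometric]
    refine ENNReal.inv_lt_top.mpr ?_
    have h1 : ENNReal.ofReal ((1/2:ℝ) ^ (s+2)) < 1 := by
      rw [← ENNReal.ofReal_one]
      refine (ENNReal.ofReal_lt_ofReal_iff (by norm_num)).mpr ?_
      exact Real.rpow_lt_one (by norm_num) (by norm_num) (by linarith)
    exact tsub_pos_of_lt h1
  calc (∫⁻ z in Metric.ball (0:ℂ) 2, (‖z‖₊ : ENNReal) ^ s)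
      ≤ ∫⁻ z in ({0} ∪ ⋃ k, U k : Set ℂ), (‖z‖₊ : ENNReal) ^ s :=
        lintegral_mono_set hcover
    _ ≤ (∫⁻ z in ({0} : Set ℂ), (‖z‖₊ : ENNReal) ^ s) +
          ∫⁻ z in (⋃ k, U k : Set ℂ), (‖z‖₊ : ENNReal) ^ s := lintegral_union_le _ _ _
    _ ≤ 0 + ∑' k : ℕ, ∫⁻ z in U k, (‖z‖₊ : ENNReal) ^ s := by
        gcongr
        · exact le_of_eq (setLIntegral_measure_zero _ _ (measure_singleton 0))
        · exact lintegral_iUnion_le _ _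
    _ ≤ 0 + ∑' k : ℕ, (M * ENNReal.ofReal 16 * (NNReal.pi : ENNReal)) *
          (ENNReal.ofReal ((1/2:ℝ) ^ (s+2))) ^ k := by
        gcongr with k
        exact hterm k
    _ = (M * ENNReal.ofReal 16 * (NNReal.pi : ENNReal)) *
          ∑' k : ℕ, (ENNReal.ofReal ((1/2:ℝ) ^ (s+2))) ^ k := by
        rw [zero_add, ENNReal.tsum_mul_left]
    _ < ⊤ := by
        refine ENNReal.mul_lt_top ?_ hsum
        refine ENNReal.mul_lt_top (ENNReal.mul_lt_top ?_ ENNReal.ofReal_lt_top) ?_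
        · exact lt_top_iff_ne_top.mpr hMne
        · exact ENNReal.coe_lt_top

end Aux


private lemma worm_norm (μ : ℝ) (α : ℂ) (j : ℤ) {z : ℂ × ℂ} (hz : z ∈ wormT μ) :
    ∃ B : ℝ, |B| ≤ 2 * (π * |α.im| + μ * |α.im| + μ * |(j:ℝ)| / 2) ∧
      ((‖Ffun α j z‖₊ : ENNReal)) ^ 2
        = (‖z.1‖₊ : ENNReal) ^ (2 * α.re) * ENNReal.ofReal (Real.exp B) := by
  obtain ⟨hz2, hz1, hz3⟩ := hz
  set t : ℝ := Real.log (‖z.2‖ ^ 2) with ht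
  have habs2 : 0 < ‖z.2‖ := norm_pos_iff.mpr hz2
  have hμ' : |t| ≤ μ := le_of_lt hz3
  have hexp1 : ‖Complex.exp (Complex.I * (t:ℂ))‖ = 1 := by
    simp [Complex.norm_exp]
  have hexp1' : ‖Complex.exp (-Complex.I * (t:ℂ))‖ = 1 := by
    simp [Complex.norm_exp]
  set w : ℂ := z.1 * Complex.exp (-Complex.I * (t:ℂ)) with hwdef
  have hprod : Complex.exp (Complex.I * (t:ℂ)) * Complex.exp (-Complex.I * (t:ℂ)) = 1 := by
    rw [← Complex.exp_add, show Complex.I * (t:ℂ) + -Complex.I * (t:ℂ) = 0 by ring,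
      Complex.exp_zero]
  have hww : w - 1 = (z.1 - Complex.exp (Complex.I * (t:ℂ))) * Complex.exp (-Complex.I * (t:ℂ)) := by
    rw [sub_mul, hprod, hwdef]
  have hw1 : ‖w - 1‖ < 1 := by
    rw [hww, norm_mul, hexp1', mul_one]; exact hz1
  have hw0 : w ≠ 0 := by
    intro h; rw [h] at hw1; simp at hw1
  have hz10 : z.1 ≠ 0 := by
    intro h; apply hw0; rw [hwdef, h, zero_mul]
  have habsw : ‖w‖ = ‖z.1‖ := by
    rw [hwdef, norm_mul, hexp1', mul_one]
  have hz1pos : (0:ℝ) < ‖z.1‖ := norm_pos_iff.mpr hz10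
  have hlog : Real.log (‖z.2‖) = t / 2 := by
    rw [ht, sq, Real.log_mul (ne_of_gt habs2) (ne_of_gt habs2)]; ring
  have hn2 : ‖z.2 ^ j‖ = Real.exp ((j:ℝ) * (t/2)) := by
    rw [norm_zpow, ← Real.rpow_intCast, Real.rpow_def_of_pos habs2, hlog]
    congr 1; ring
  have hnE : ‖w ^ α‖ = ‖z.1‖ ^ α.re * Real.exp (-(w.arg * α.im)) := by
    rw [Complex.norm_cpow_of_ne_zero hw0, habsw, Real.exp_neg, div_eq_mul_inv]
  have hre : (Complex.I * α * (t:ℂ)).re = -(α.im * t) := by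
    have h : Complex.I * α * (t:ℂ) = (α * (t:ℂ)) * Complex.I := by ring
    rw [h, Complex.mul_I_re]
    simp [Complex.mul_im]
  have hnexp : ‖Complex.exp (Complex.I * α * (t:ℂ))‖ = Real.exp (-(α.im * t)) := by
    rw [Complex.norm_exp, hre]
  set B1 : ℝ := -(w.arg * α.im) + -(α.im * t) + (j:ℝ) * (t/2) with hB1
  have hF : ‖Ffun α j z‖ = ‖z.1‖ ^ α.re * Real.exp B1 := by
    have hFdef : Ffun α j z = w ^ α * Complex.exp (Complex.I * α * (t:ℂ)) * z.2 ^ j := rfl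
    rw [hFdef, norm_mul, norm_mul, hnE, hnexp, hn2, hB1,
      Real.exp_add, Real.exp_add]
    ring
  refine ⟨2 * B1, ?_, ?_⟩
  · have harg : |w.arg| ≤ π := Complex.abs_arg_le_pi w
    have h1 : |(-(w.arg * α.im))| ≤ π * |α.im| := by
      rw [abs_neg, abs_mul]
      exact mul_le_mul_of_nonneg_right harg (abs_nonneg _)
    have h2 : |(-(α.im * t))| ≤ μ * |α.im| := by
      rw [abs_neg, abs_mul, mul_comm]
      exact mul_le_mul_of_nonneg_right hμ' (abs_nonneg _)
    have h3 : |(j:ℝ) * (t/2)| ≤ μ * |(j:ℝ)| / 2 := by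
      rw [abs_mul, abs_div, abs_two]
      calc |(j:ℝ)| * (|t| / 2) ≤ |(j:ℝ)| * (μ / 2) := by
            apply mul_le_mul_of_nonneg_left _ (abs_nonneg _)
            linarith
        _ = μ * |(j:ℝ)| / 2 := by ring
    calc |2 * B1| = 2 * |B1| := by rw [abs_mul, abs_two]
      _ ≤ 2 * (|(-(w.arg * α.im))| + |(-(α.im * t))| + |(j:ℝ) * (t/2)|) := by
          have := abs_add_three (-(w.arg * α.im)) (-(α.im * t)) ((j:ℝ) * (t/2))
          linarith
      _ ≤ 2 * (π * |α.im| + μ * |α.im| + μ * |(j:ℝ)| / 2) := by linarith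
  · have hF2 : ‖Ffun α j z‖ ^ 2 = ‖z.1‖ ^ (2 * α.re) * Real.exp (2 * B1) := by
      rw [hF, mul_pow]
      congr 1
      · rw [← Real.rpow_natCast (‖z.1‖ ^ α.re) 2, ← Real.rpow_mul (norm_nonneg _)]
        congr 1; push_cast; ring
      · rw [show (2:ℝ) * B1 = ((2:ℕ):ℝ) * B1 by push_cast; ring, Real.exp_nat_mul]
    calc ((‖Ffun α j z‖₊ : ENNReal)) ^ 2
        = ENNReal.ofReal (‖Ffun α j z‖ ^ 2) := by
          rw [← enorm_eq_nnnorm, ← ofReal_norm, ← ENNReal.ofReal_pow (norm_nonneg _)]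
      _ = ENNReal.ofReal (‖z.1‖ ^ (2 * α.re)) * ENNReal.ofReal (Real.exp (2 * B1)) := by
          rw [hF2, ENNReal.ofReal_mul (Real.rpow_nonneg (norm_nonneg _) _)]
      _ = (‖z.1‖₊ : ENNReal) ^ (2 * α.re) * ENNReal.ofReal (Real.exp (2 * B1)) := by
          rw [← enorm_eq_nnnorm, ← ofReal_norm, ENNReal.ofReal_rpow_of_pos hz1pos]

set_option maxHeartbeats 2000000 in
theorem Ffun_memL2_iff (μ : ℝ) (hμ : 0 < μ) (α : ℂ) (j : ℤ) :
    (∫⁻ z in wormT μ, (‖Ffun α j z‖₊ : ENNReal) ^ 2) < ⊤ ↔ -1 < α.re := by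
  set a := α.re with ha
  set K : ℝ := 2 * (π * |α.im| + μ * |α.im| + μ * |(j:ℝ)| / 2) with hK
  set g : ℂ → ENNReal := fun x => (‖x‖₊ : ENNReal) ^ (2 * a) with hg
  have hgm : Measurable g := meas_g _
  set c : ENNReal := ENNReal.ofReal (Real.exp (-K)) with hc
  set C : ENNReal := ENNReal.ofReal (Real.exp K) with hCdef
  have hc0 : c ≠ 0 := by
    simp [hc, ENNReal.ofReal_eq_zero, not_le, Real.exp_pos]
  have hCt : C ≠ ⊤ := ENNReal.ofReal_ne_top
  have hle : ∀ z ∈ wormT μ, ((‖Ffun α j z‖₊ : ENNReal)) ^ 2 ≤ C * g z.1 := by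
    intro z hz
    obtain ⟨B, hB, hEq⟩ := worm_norm μ α j hz
    rw [hEq, mul_comm C]
    exact mul_le_mul_right (ENNReal.ofReal_le_ofReal
      (Real.exp_le_exp.mpr (abs_le.mp hB).2)) _
  have hge : ∀ z ∈ wormT μ, c * g z.1 ≤ ((‖Ffun α j z‖₊ : ENNReal)) ^ 2 := by
    intro z hz
    obtain ⟨B, hB, hEq⟩ := worm_norm μ α j hz
    rw [hEq, mul_comm c]
    exact mul_le_mul_right (ENNReal.ofReal_le_ofReal
      (Real.exp_le_exp.mpr (by linarith [(abs_le.mp hB).1]))) _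
  have hFmeas : Measurable (Ffun α j) := by
    have hlogm : Measurable fun z : ℂ × ℂ => ((Real.log (‖z.2‖ ^ 2) : ℝ) : ℂ) :=
      Complex.measurable_ofReal.comp (Real.measurable_log.comp
        ((continuous_norm.comp continuous_snd).pow 2).measurable)
    have hbase : Measurable fun z : ℂ × ℂ =>
        z.1 * Complex.exp (-Complex.I * ((Real.log (‖z.2‖ ^ 2) : ℝ) : ℂ)) :=
      measurable_fst.mul (Complex.continuous_exp.measurable.comp (hlogm.const_mul (-Complex.I)))
    have hcpow : Measurable fun z : ℂ × ℂ =>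
        (z.1 * Complex.exp (-Complex.I * ((Real.log (‖z.2‖ ^ 2) : ℝ) : ℂ))) ^ α :=
      hbase.pow measurable_const
    have hexpf : Measurable fun z : ℂ × ℂ =>
        Complex.exp (Complex.I * α * ((Real.log (‖z.2‖ ^ 2) : ℝ) : ℂ)) :=
      Complex.continuous_exp.measurable.comp (hlogm.const_mul (Complex.I * α))
    have hz2j : Measurable fun z : ℂ × ℂ => z.2 ^ j := by measurability
    exact (hcpow.mul hexpf).mul hz2j
  have hFm : Measurable fun z : ℂ × ℂ => ((‖Ffun α j z‖₊ : ENNReal)) ^ 2 :=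
    (hFmeas.nnnorm.coe_nnreal_ennreal).pow_const 2
  have hIle : (∫⁻ z in wormT μ, ((‖Ffun α j z‖₊ : ENNReal)) ^ 2)
      ≤ C * ∫⁻ z in wormT μ, g z.1 := by
    calc (∫⁻ z in wormT μ, ((‖Ffun α j z‖₊ : ENNReal)) ^ 2)
        ≤ ∫⁻ z in wormT μ, C * g z.1 :=
          setLIntegral_mono ((hgm.comp measurable_fst).const_mul C) hle
      _ = C * ∫⁻ z in wormT μ, g z.1 := lintegral_const_mul C (hgm.comp measurable_fst)
  have hIge : c * (∫⁻ z in wormT μ, g z.1)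
      ≤ ∫⁻ z in wormT μ, ((‖Ffun α j z‖₊ : ENNReal)) ^ 2 := by
    calc c * (∫⁻ z in wormT μ, g z.1)
        = ∫⁻ z in wormT μ, c * g z.1 :=
          (lintegral_const_mul c (hgm.comp measurable_fst)).symm
      _ ≤ ∫⁻ z in wormT μ, ((‖Ffun α j z‖₊ : ENNReal)) ^ 2 := setLIntegral_mono hFm hge
  have hiff : (∫⁻ z in wormT μ, ((‖Ffun α j z‖₊ : ENNReal)) ^ 2) < ⊤
      ↔ (∫⁻ z in wormT μ, g z.1) < ⊤ := by
    constructor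
    · intro h
      by_contra htop
      rw [not_lt, top_le_iff] at htop
      rw [htop, ENNReal.mul_top hc0] at hIge
      rw [top_le_iff.mp hIge] at h
      exact lt_irrefl ⊤ h
    · intro h
      exact lt_of_le_of_lt hIle (ENNReal.mul_lt_top hCt.lt_top h)
  rw [hiff]
  constructor
  · -- divergence when a ≤ -1
    intro hfin
    by_contra hcon
    push_neg at hcon
    have h2a : 2 * a + 2 ≤ 0 := by linarith
    set δ : ℝ := min μ (1/8) with hδ
    have hδ0 : 0 < δ := lt_min hμ (by norm_num)
    have hδμ : δ ≤ μ := min_le_left _ _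
    have hδ8 : δ ≤ 1/8 := min_le_right _ _
    set A' : Set ℂ := (norm : ℂ → ℝ) ⁻¹' (Set.Ioo (Real.exp (-(δ/2))) (Real.exp (δ/2))) with hA'
    have hA'open : IsOpen A' := isOpen_Ioo.preimage continuous_norm
    have hA'meas : MeasurableSet A' := hA'open.measurableSet
    have hA'pos : 0 < volume A' := by
      refine hA'open.measure_pos volume ⟨1, ?_⟩
      rw [hA']
      simp only [Set.mem_preimage, norm_one, Set.mem_Ioo]
      constructor
      · calc Real.exp (-(δ/2)) < Real.exp 0 := Real.exp_lt_exp.mpr (by linarith)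
          _ = 1 := Real.exp_zero
      · calc (1:ℝ) = Real.exp 0 := Real.exp_zero.symm
          _ < Real.exp (δ/2) := Real.exp_lt_exp.mpr (by linarith)
    set r : ℕ → ℝ := fun k => (1/4:ℝ)^k with hr
    have hr0 : ∀ k, 0 < r k := fun k => by positivity
    have hr1 : ∀ k, r k ≤ 1 := fun k => pow_le_one₀ (by norm_num) (by norm_num)
    set T : ℕ → Set ℂ := fun k => Metric.ball ((r k / 2 : ℝ) : ℂ) (r k / 8) with hT
    have hTnorm : ∀ k, ∀ x ∈ T k, 3 * r k / 8 < ‖x‖ ∧ ‖x‖ < 5 * r k / 8 := by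
      intro k x hx
      simp only [hT] at hx
      simp only [Metric.mem_ball, dist_eq_norm] at hx
      have hcn : ‖((r k / 2 : ℝ):ℂ)‖ = r k / 2 := by
        rw [Complex.norm_real, Real.norm_eq_abs, abs_of_pos (by linarith [hr0 k])]
      constructor
      · have h1 : ‖((r k / 2 : ℝ):ℂ)‖ ≤ ‖((r k / 2 : ℝ):ℂ) - x‖ + ‖x‖ := by
          calc ‖((r k / 2 : ℝ):ℂ)‖ = ‖(((r k / 2 : ℝ):ℂ) - x) + x‖ := by ring_nf
            _ ≤ ‖((r k / 2 : ℝ):ℂ) - x‖ + ‖x‖ := norm_add_le _ _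
        rw [norm_sub_rev] at h1
        rw [hcn] at h1
        linarith
      · have h1 : ‖x‖ ≤ ‖x - ((r k / 2 : ℝ):ℂ)‖ + ‖((r k / 2 : ℝ):ℂ)‖ := by
          calc ‖x‖ = ‖(x - ((r k / 2 : ℝ):ℂ)) + ((r k / 2 : ℝ):ℂ)‖ := by ring_nf
            _ ≤ _ := norm_add_le _ _
        rw [hcn] at h1
        linarith
    have hTsub : ∀ k, T k ×ˢ A' ⊆ wormT μ := by
      intro k zz hzz
      obtain ⟨hzT, hzA⟩ := hzz
      rw [hA'] at hzA
      obtain ⟨hA1, hA2⟩ := hzA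
      have habs : 0 < ‖zz.2‖ := lt_trans (Real.exp_pos _) hA1
      have hz20 : zz.2 ≠ 0 := by
        intro h; rw [h] at habs; simp at habs
      set t : ℝ := Real.log (‖zz.2‖ ^ 2) with htd
      have hlt : Real.log (‖zz.2‖) < δ/2 := by
        calc Real.log (‖zz.2‖) < Real.log (Real.exp (δ/2)) :=
              Real.log_lt_log habs hA2
          _ = δ/2 := Real.log_exp _
      have hgt : -(δ/2) < Real.log (‖zz.2‖) := by
        calc -(δ/2) = Real.log (Real.exp (-(δ/2))) := (Real.log_exp _).symm
          _ < Real.log (‖zz.2‖) := Real.log_lt_log (Real.exp_pos _) hA1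
      have htsq : t = 2 * Real.log (‖zz.2‖) := by
        rw [htd, sq, Real.log_mul (ne_of_gt habs) (ne_of_gt habs)]; ring
      have htb : |t| < δ := by
        rw [htsq, abs_lt]; constructor <;> linarith
      refine ⟨hz20, ?_, lt_of_lt_of_le htb hδμ⟩
      set e : ℂ := Complex.exp (Complex.I * (t:ℂ)) with he
      have habse : ‖e‖ = 1 := by simp [he, Complex.norm_exp]
      have h1 : ‖zz.1 - ((r k / 2:ℝ):ℂ)‖ < r k / 8 := by
        have h := hzT; simp only [hT] at h
        simp only [Metric.mem_ball] at h
        rwa [Complex.dist_eq] at h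
      have he1 : ‖e - 1‖ ≤ 2 * |t| := by
        have habsit : ‖Complex.I * (t:ℂ)‖ = |t| := by
          rw [norm_mul, Complex.norm_I, one_mul, Complex.norm_real, Real.norm_eq_abs]
        have := Complex.norm_exp_sub_one_le (x := Complex.I * (t:ℂ))
          (by rw [habsit]; linarith)
        rwa [habsit] at this
      have h2 : ‖((r k/2:ℝ):ℂ) - ((r k/2:ℝ):ℂ) * e‖ ≤ r k / 8 := by
        have heq : ((r k/2:ℝ):ℂ) - ((r k/2:ℝ):ℂ) * e = -(((r k/2:ℝ):ℂ) * (e - 1)) := by ring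
        rw [heq, norm_neg, norm_mul, Complex.norm_real, Real.norm_eq_abs,
          abs_of_pos (by linarith [hr0 k])]
        calc r k/2 * ‖e - 1‖ ≤ r k/2 * (2 * |t|) :=
              mul_le_mul_of_nonneg_left he1 (by linarith [hr0 k])
          _ ≤ r k/2 * (2 * δ) := by
              have : |t| ≤ δ := le_of_lt htb
              nlinarith [hr0 k]
          _ ≤ r k / 8 := by nlinarith [hr0 k]
      have h3 : ‖((r k/2:ℝ):ℂ) * e - e‖ = 1 - r k / 2 := by
        have heq : ((r k/2:ℝ):ℂ) * e - e = ((r k/2 - 1 : ℝ):ℂ) * e := by push_cast; ring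
        rw [heq, norm_mul, habse, mul_one, Complex.norm_real, Real.norm_eq_abs,
          abs_of_nonpos (by linarith [hr1 k])]
        ring
      have htri : ‖zz.1 - e‖ ≤ ‖zz.1 - ((r k/2:ℝ):ℂ)‖
          + ‖((r k/2:ℝ):ℂ) - ((r k/2:ℝ):ℂ) * e‖
          + ‖((r k/2:ℝ):ℂ) * e - e‖ := by
        rw [← Complex.dist_eq, ← Complex.dist_eq, ← Complex.dist_eq, ← Complex.dist_eq]
        exact dist_triangle4 _ _ _ _
      calc ‖zz.1 - e‖ ≤ _ := htri
        _ < r k/8 + r k/8 + (1 - r k/2) := by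
            rw [h3]
            have := hr0 k
            linarith
        _ ≤ 1 := by linarith [hr0 k]
    have hdisj : Pairwise (Function.onFun Disjoint fun k => T k ×ˢ A') := by
      have hTd : ∀ k l, k < l → Disjoint (T k ×ˢ A') (T l ×ˢ A') := by
        intro k l hklt
        rw [Set.disjoint_left]
        rintro ⟨x, y⟩ ⟨hxk, _⟩ ⟨hxl, _⟩
        obtain ⟨hk1, hk2⟩ := hTnorm k x hxk
        obtain ⟨hl1, hl2⟩ := hTnorm l x hxl
        have hrl : r l ≤ r k * (1/4) := by
          rw [hr]
          calc ((1/4:ℝ))^l ≤ (1/4)^(k+1) :=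
                pow_le_pow_of_le_one (by norm_num) (by norm_num) (by omega)
            _ = (1/4)^k * (1/4) := pow_succ _ _
        have := hr0 k
        linarith
      intro k l hkl
      rcases lt_or_gt_of_ne hkl with h | h
      · exact hTd k l h
      · exact (hTd l k h).symm
    have hlower : ∀ k : ℕ, (ENNReal.ofReal (1/64) * (NNReal.pi : ENNReal)) * volume A'
        ≤ ∫⁻ zz in T k ×ˢ A', g zz.1 := by
      intro k
      rw [prod_lint g hgm (T k) A']
      set q : ENNReal := ENNReal.ofReal (r k) with hq
      have hq0 : q ≠ 0 := by
        simp [hq, ENNReal.ofReal_eq_zero, not_le, hr0 k]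
      have hq1 : q ≤ 1 := by
        rw [hq, ← ENNReal.ofReal_one]
        exact ENNReal.ofReal_le_ofReal (hr1 k)
      have hpt : ∀ x ∈ T k, q ^ (2*a) ≤ g x := by
        intro x hx
        have hxr : ‖x‖ ≤ r k := by
          obtain ⟨_, h2⟩ := hTnorm k x hx
          linarith [hr0 k]
        have hle' : (‖x‖₊ : ENNReal) ≤ q := by
          rw [hq, ← enorm_eq_nnnorm, ← ofReal_norm]
          exact ENNReal.ofReal_le_ofReal hxr
        exact ennrpow_anti hle' (by linarith)
      have h1 : q ^ (2*a) * volume (T k) ≤ ∫⁻ x in T k, g x := by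
        rw [← setLIntegral_const]
        exact setLIntegral_mono hgm hpt
      have hvolT : volume (T k) = ENNReal.ofReal (r k / 8) ^ 2 * (NNReal.pi : ENNReal) := by
        simp only [hT]; exact Complex.volume_ball _ _
      have e3 : (1:ENNReal) ≤ q ^ (2*a) * q ^ (2:ℕ) := by
        have hcast : (q : ENNReal) ^ (2:ℕ) = q ^ ((2:ℕ):ℝ) := (ENNReal.rpow_natCast _ 2).symm
        rw [hcast, ← ENNReal.rpow_add _ _ hq0 ENNReal.ofReal_ne_top]
        calc (1:ENNReal) = q ^ (0:ℝ) := ENNReal.rpow_zero.symm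
          _ ≤ q ^ (2*a + ((2:ℕ):ℝ)) :=
            ENNReal.rpow_le_rpow_of_exponent_ge hq1 (by push_cast; linarith)
      have hkey : (ENNReal.ofReal (1/64) * (NNReal.pi : ENNReal)) ≤ q ^ (2*a) * volume (T k) := by
        rw [hvolT]
        have e1 : ENNReal.ofReal (r k / 8) ^ 2 = ENNReal.ofReal (1/64) * q ^ (2:ℕ) := by
          rw [hq, ← ENNReal.ofReal_pow (by positivity), ← ENNReal.ofReal_pow (le_of_lt (hr0 k)),
            ← ENNReal.ofReal_mul (by norm_num)]
          congr 1; ring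
        rw [e1]
        calc ENNReal.ofReal (1/64) * (NNReal.pi : ENNReal)
            = 1 * (ENNReal.ofReal (1/64) * (NNReal.pi : ENNReal)) := (one_mul _).symm
          _ ≤ (q ^ (2*a) * q ^ (2:ℕ)) * (ENNReal.ofReal (1/64) * (NNReal.pi : ENNReal)) :=
              mul_le_mul_left e3 _
          _ = q ^ (2*a) * (ENNReal.ofReal (1/64) * q ^ (2:ℕ) * (NNReal.pi : ENNReal)) := by
              ring
      calc (ENNReal.ofReal (1/64) * (NNReal.pi : ENNReal)) * volume A'
          ≤ (q ^ (2*a) * volume (T k)) * volume A' := mul_le_mul_left hkey _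
        _ ≤ (∫⁻ x in T k, g x) * volume A' := mul_le_mul_left h1 _
    have hpine : (NNReal.pi : ENNReal) ≠ 0 := by
      simp only [ne_eq, ENNReal.coe_eq_zero]
      exact NNReal.pi_ne_zero
    have hcne : (ENNReal.ofReal (1/64) * (NNReal.pi : ENNReal)) * volume A' ≠ 0 := by
      refine mul_ne_zero (mul_ne_zero ?_ hpine) (ne_of_gt hA'pos)
      simp only [ne_eq, ENNReal.ofReal_eq_zero, not_le]
      norm_num
    have htop : (∫⁻ z in wormT μ, g z.1) = ⊤ := by
      rw [← top_le_iff]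
      have h1 : (∫⁻ z in ⋃ k, T k ×ˢ A', g z.1) ≤ ∫⁻ z in wormT μ, g z.1 :=
        lintegral_mono_set (Set.iUnion_subset hTsub)
      rw [lintegral_iUnion (fun k => (by simp only [hT]; exact measurableSet_ball :
        MeasurableSet (T k)).prod hA'meas) hdisj] at h1
      calc (⊤:ENNReal) = ∑' (_ : ℕ), (ENNReal.ofReal (1/64) * (NNReal.pi : ENNReal)) * volume A' :=
            (ENNReal.tsum_const_eq_top_of_ne_zero hcne).symm
        _ ≤ ∑' k : ℕ, ∫⁻ zz in T k ×ˢ A', g zz.1 := ENNReal.tsum_le_tsum hlower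
        _ ≤ ∫⁻ z in wormT μ, g z.1 := h1
    rw [htop] at hfin
    exact lt_irrefl ⊤ hfin
  · intro hre
    have hsub : wormT μ ⊆ Metric.ball (0:ℂ) 2 ×ˢ Metric.ball (0:ℂ) (Real.exp (μ/2) + 1) := by
      rintro ⟨z1, z2⟩ ⟨h0, h1, h2⟩
      have habs : 0 < ‖z2‖ := norm_pos_iff.mpr h0
      constructor
      · set t : ℝ := Real.log (‖z2‖ ^ 2) with htd
        have he1 : ‖Complex.exp (Complex.I * (t:ℂ))‖ = 1 := by
          simp [Complex.norm_exp]
        simp only [Metric.mem_ball, dist_zero_right]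
        have htri : ‖z1‖ ≤ ‖z1 - Complex.exp (Complex.I * (t:ℂ))‖
            + ‖Complex.exp (Complex.I * (t:ℂ))‖ := by
          calc ‖z1‖
              = ‖(z1 - Complex.exp (Complex.I * (t:ℂ)))
                + Complex.exp (Complex.I * (t:ℂ))‖ := by ring_nf
            _ ≤ _ := norm_add_le _ _
        rw [he1] at htri
        linarith
      · have hlog : Real.log (‖z2‖) < μ/2 := by
          have h2' := (abs_lt.mp h2).2
          have hsq : Real.log (‖z2‖ ^ 2) = 2 * Real.log (‖z2‖) := by
            rw [sq, Real.log_mul (ne_of_gt habs) (ne_of_gt habs)]; ring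
          rw [hsq] at h2'
          linarith
        have habslt : ‖z2‖ < Real.exp (μ/2) := by
          calc ‖z2‖ = Real.exp (Real.log (‖z2‖)) := (Real.exp_log habs).symm
            _ < Real.exp (μ/2) := Real.exp_lt_exp.mpr hlog
        simp only [Metric.mem_ball, dist_zero_right]
        linarith
    calc (∫⁻ z in wormT μ, g z.1)
        ≤ ∫⁻ z in Metric.ball (0:ℂ) 2 ×ˢ Metric.ball (0:ℂ) (Real.exp (μ/2) + 1), g z.1 :=
          lintegral_mono_set hsub
      _ = (∫⁻ x in Metric.ball (0:ℂ) 2, g x)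
            * volume (Metric.ball (0:ℂ) (Real.exp (μ/2) + 1)) := prod_lint g hgm _ _
      _ < ⊤ := ENNReal.mul_lt_top (finite_ball (by linarith)) measure_ball_lt_top
end

section
/- Let μ > 0, let j, j' ∈ ℤ with j ≠ j', and let α, β ∈ ℂ with Re α > -1 and Re β > -1. Then ∫_{W'_μ} F_{α,j}(z) · conj(F_{β,j'}(z)) dV(z) = 0; that is, functions with different Fourier indices in the second variable are orthogonal in the Bergman space of W'_μ. -/
open MeasureTheory Real

theorem inner_Ffun_Ffun_ne_index_eq_zero (μ : ℝ) (hμ : 0 < μ) (j j' : ℤ) (hjj' : j ≠ j')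
    (α β : ℂ) (hα : -1 < α.re) (hβ : -1 < β.re) :
    ∫ z in wormT μ, Ffun α j z * (starRingEnd ℂ) (Ffun β j' z) = 0 := by
  set θ : ℝ := π / (j - j' : ℤ) with hθ
  set c : Circle := Circle.exp θ with hc
  set T : ℂ × ℂ → ℂ × ℂ := fun z => (z.1, (c : ℂ) * z.2) with hTdef
  have hcabs : ‖(c : ℂ)‖ = 1 := Circle.norm_coe c
  have hrot : MeasurePreserving (fun w : ℂ => (c : ℂ) * w) volume volume := by
    have := (rotation c).measurePreserving
    have heq : (fun w : ℂ => (c : ℂ) * w) = ⇑(rotation c) := by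
      ext w
      simp [rotation_apply]
    rw [heq]
    exact this
  have hT : MeasurePreserving T volume volume := by
    have h := (MeasurePreserving.id (volume : Measure ℂ)).prod hrot
    rw [← Measure.volume_eq_prod] at h
    exact h
  have hTemb : MeasurableEmbedding T := by
    have : T = Prod.map id (fun w : ℂ => (c : ℂ) * w) := rfl
    rw [this]
    exact MeasurableEmbedding.id.prodMap
      ((Homeomorph.mulLeft₀ (c : ℂ) (by simp [Circle.coe_ne_zero])).measurableEmbedding)
  have hset : T ⁻¹' wormT μ = wormT μ := by
    ext z
    have hcne : (c : ℂ) ≠ 0 := Circle.coe_ne_zero c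
    simp only [wormT, Set.mem_preimage, Set.mem_setOf_eq, hTdef, norm_mul, hcabs, one_mul,
      mul_ne_zero_iff]
    tauto
  set f : ℂ × ℂ → ℂ := fun z => Ffun α j z * (starRingEnd ℂ) (Ffun β j' z) with hf
  have key : ∀ z : ℂ × ℂ, f (T z) = Complex.exp ((j - j' : ℤ) * θ * Complex.I) * f z := by
    intro z
    have habs : ‖(c : ℂ) * z.2‖ = ‖z.2‖ := by
      rw [norm_mul, hcabs, one_mul]
    simp only [hf, Ffun, Efun, hTdef, habs, map_mul, map_zpow₀, mul_zpow]
    have hcz : (c : ℂ) ^ j * (starRingEnd ℂ) ((c : ℂ)) ^ j' =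
        Complex.exp ((j - j' : ℤ) * θ * Complex.I) := by
      rw [hc, Circle.coe_exp, ← Complex.exp_conj]
      simp only [map_mul, Complex.conj_I, Complex.conj_ofReal]
      rw [← Complex.exp_int_mul, ← Complex.exp_int_mul, ← Complex.exp_add]
      congr 1
      push_cast
      ring
    rw [← hcz]; ring
  have hint : ∫ z in wormT μ, f z = Complex.exp ((j - j' : ℤ) * θ * Complex.I) * ∫ z in wormT μ, f z := by
    conv_lhs => rw [← hT.setIntegral_preimage_emb hTemb f (wormT μ)]
    rw [hset]
    simp_rw [key]
    rw [integral_const_mul]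
  have hexp : Complex.exp ((j - j' : ℤ) * θ * Complex.I) = -1 := by
    have hne : ((j - j' : ℤ) : ℝ) ≠ 0 := by exact_mod_cast sub_ne_zero.mpr hjj'
    have hre : ((j - j' : ℤ) : ℝ) * θ = π := by
      rw [hθ, mul_comm, div_mul_cancel₀ _ hne]
    have harg : ((j - j' : ℤ) : ℂ) * (θ : ℂ) = (π : ℂ) := by
      rw [← Complex.ofReal_intCast, ← Complex.ofReal_mul, hre]
    rw [harg, Complex.exp_pi_mul_I]
  rw [hexp, neg_one_mul] at hint
  have : (∫ z in wormT μ, f z) + ∫ z in wormT μ, f z = 0 := by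
    nth_rewrite 1 [hint]; ring
  exact add_self_eq_zero.mp this
end

section
/- Let μ > 0 and c₀ > -1. Each of the two sets {H_{2k,j} : j ∈ ℤ, k = 0,1,2,…} and {H_{2k+1,j} : j ∈ ℤ, k = 0,1,2,…} is an orthogonal system in the Bergman space of W'_μ: for all k, k' ≥ 0 and j, j' ∈ ℤ with (k,j) ≠ (k',j'), one has ∫_{W'_μ} H_{2k,j}(z) · conj(H_{2k',j'}(z)) dV(z) = 0 and ∫_{W'_μ} H_{2k+1,j}(z) · conj(H_{2k'+1,j'}(z)) dV(z) = 0. -/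
open MeasureTheory Real

noncomputable section

/-- `H_{ℓ,j}(z) = E_{c₀ + νℓ + i(j+1)/2}(z) z₂^j`, where `ν = π/(2μ)`. -/
def Hfun (μ c₀ : ℝ) (ℓ : ℕ) (j : ℤ) (z : ℂ × ℂ) : ℂ :=
  Efun ((c₀ : ℂ) + ((π / (2 * μ) : ℝ) : ℂ) * (ℓ : ℂ) + Complex.I * ((j : ℂ) + 1) / 2) z *
    z.2 ^ j

end

noncomputable section WormAux

namespace WormProof

open Complex MeasureTheory Set

/-- `log |z₂|²`. -/
def tA (z : ℂ × ℂ) : ℝ := Real.log (‖z.2‖ ^ 2)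

/-- worm-type slab with `log|z₂|² ∈ (p,q)`. -/
def Wset (p q : ℝ) : Set (ℂ × ℂ) :=
  {z | z.2 ≠ 0 ∧ ‖z.1 - Complex.exp (Complex.I * (tA z : ℂ))‖ < 1 ∧
    tA z ∈ Set.Ioo p q}

lemma wormT_eq (μ : ℝ) : wormT μ = Wset (-μ) μ := by
  ext z
  simp only [wormT, Wset, Set.mem_setOf_eq, tA, Set.mem_Ioo, abs_lt]

/-- the index `η` of `Hfun`. -/
def ηc (μ c₀ : ℝ) (ℓ : ℕ) (j : ℤ) : ℂ :=
  (c₀ : ℂ) + ((π / (2 * μ) : ℝ) : ℂ) * (ℓ : ℂ) + Complex.I * ((j : ℂ) + 1) / 2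

lemma Hfun_eq (μ c₀ : ℝ) (ℓ : ℕ) (j : ℤ) (z : ℂ × ℂ) :
    Hfun μ c₀ ℓ j z = Efun (ηc μ c₀ ℓ j) z * z.2 ^ j := rfl

lemma Efun_eq (η : ℂ) (w : ℂ × ℂ) :
    Efun η w = (w.1 * Complex.exp (-Complex.I * (tA w : ℂ))) ^ η *
      Complex.exp (Complex.I * η * (tA w : ℂ)) := rfl

/-- the shear maps used for symmetry. -/
def Tmap (a b : ℂ) (z : ℂ × ℂ) : ℂ × ℂ := (a * z.1, b * z.2)

/-- `exp(i s)`. -/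
def aex (s : ℝ) : ℂ := Complex.exp (Complex.I * (s : ℂ))

lemma aex_ne (s : ℝ) : aex s ≠ 0 := Complex.exp_ne_zero _

lemma abs_aex (s : ℝ) : ‖aex s‖ = 1 := by
  simp [aex, Complex.norm_exp]

def mulCLM (a : ℂ) : ℂ →L[ℝ] ℂ := (a • (1 : ℂ →L[ℂ] ℂ)).restrictScalars ℝ

lemma mulCLM_apply (a z : ℂ) : mulCLM a z = a * z := by
  simp [mulCLM, smul_eq_mul]

def TL (a b : ℂ) : (ℂ × ℂ) →L[ℝ] (ℂ × ℂ) := (mulCLM a).prodMap (mulCLM b)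

lemma TL_apply (a b : ℂ) (z : ℂ × ℂ) : TL a b z = Tmap a b z := by
  simp [TL, Tmap, mulCLM_apply, Prod.map]

lemma hasFDerivAt_Tmap (a b : ℂ) (x : ℂ × ℂ) : HasFDerivAt (Tmap a b) (TL a b) x := by
  have : Tmap a b = ⇑(TL a b) := funext fun z => (TL_apply a b z).symm
  rw [this]
  exact (TL a b).hasFDerivAt

lemma det_mulCLM (a : ℂ) : LinearMap.det ((mulCLM a) : ℂ →ₗ[ℝ] ℂ) = Complex.normSq a := by
  have h : ((mulCLM a) : ℂ →ₗ[ℝ] ℂ) = Algebra.lmul ℝ ℂ a := by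
    ext z
    simp [mulCLM_apply]
  rw [h, ← Algebra.norm_apply, Algebra.norm_complex_apply]

lemma det_TL (a b : ℂ) : (TL a b).det = Complex.normSq a * Complex.normSq b := by
  have h : ((TL a b) : (ℂ × ℂ) →ₗ[ℝ] (ℂ × ℂ)) =
      LinearMap.prodMap ((mulCLM a) : ℂ →ₗ[ℝ] ℂ) ((mulCLM b) : ℂ →ₗ[ℝ] ℂ) := by
    ext z <;> rfl
  rw [ContinuousLinearMap.det, h,
    ← LinearMap.det_toMatrix (Complex.basisOneI.prod Complex.basisOneI),
    LinearMap.toMatrix_prodMap, Matrix.det_fromBlocks_zero₁₂,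
    LinearMap.det_toMatrix, LinearMap.det_toMatrix, det_mulCLM, det_mulCLM]

lemma inj_Tmap {a b : ℂ} (ha : a ≠ 0) (hb : b ≠ 0) : Function.Injective (Tmap a b) := by
  rintro ⟨x1, x2⟩ ⟨y1, y2⟩ hxy
  simp only [Tmap, Prod.mk.injEq] at hxy ⊢
  exact ⟨mul_left_cancel₀ ha hxy.1, mul_left_cancel₀ hb hxy.2⟩

section openness

lemma isOpen_snd_ne : IsOpen {z : ℂ × ℂ | z.2 ≠ 0} := by
  have : {z : ℂ × ℂ | z.2 ≠ 0} = Prod.snd ⁻¹' {w : ℂ | w ≠ 0} := rfl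
  rw [this]
  exact isOpen_ne.preimage continuous_snd

lemma continuousOn_tA : ContinuousOn tA {z : ℂ × ℂ | z.2 ≠ 0} := by
  intro z hz
  apply ContinuousAt.continuousWithinAt
  have h1 : ContinuousAt (fun z : ℂ × ℂ => ‖z.2‖ ^ 2) z :=
    ((continuous_norm.comp continuous_snd).pow 2).continuousAt
  have h2 : ‖z.2‖ ^ 2 ≠ 0 := pow_ne_zero _ (norm_ne_zero_iff.mpr hz)
  exact h1.log h2

lemma isOpen_Wset (p q : ℝ) : IsOpen (Wset p q) := by
  have hc : ContinuousOn
      (fun z : ℂ × ℂ =>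
        (‖z.1 - Complex.exp (Complex.I * (tA z : ℂ))‖, tA z))
      {z : ℂ × ℂ | z.2 ≠ 0} := by
    apply ContinuousOn.prodMk
    · apply continuous_norm.comp_continuousOn
      apply ContinuousOn.sub (continuous_fst.continuousOn)
      apply Complex.continuous_exp.comp_continuousOn
      exact continuousOn_const.mul (Complex.continuous_ofReal.comp_continuousOn continuousOn_tA)
    · exact continuousOn_tA
  have h := hc.isOpen_inter_preimage isOpen_snd_ne
    ((isOpen_Iio (a := (1:ℝ))).prod (isOpen_Ioo (a := p) (b := q)))
  have he : Wset p q = {z : ℂ × ℂ | z.2 ≠ 0} ∩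
      (fun z : ℂ × ℂ =>
        (‖z.1 - Complex.exp (Complex.I * (tA z : ℂ))‖, tA z)) ⁻¹'
        (Set.Iio 1 ×ˢ Set.Ioo p q) := by
    ext z
    simp only [Wset, Set.mem_setOf_eq, Set.mem_inter_iff, Set.mem_preimage, Set.mem_prod,
      Set.mem_Iio, Set.mem_Ioo]
    all_goals tauto
  exact he ▸ h

lemma isOpen_piece (r : ℝ) : IsOpen {z : ℂ × ℂ | z.2 ≠ 0 ∧ tA z < r} := by
  have h := continuousOn_tA.isOpen_inter_preimage isOpen_snd_ne (isOpen_Iio (a := r))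
  have he : {z : ℂ × ℂ | z.2 ≠ 0 ∧ tA z < r} =
      {z : ℂ × ℂ | z.2 ≠ 0} ∩ tA ⁻¹' Set.Iio r := rfl
  rw [he]; exact h

lemma isOpen_piece' (r : ℝ) : IsOpen {z : ℂ × ℂ | z.2 ≠ 0 ∧ r < tA z} := by
  have h := continuousOn_tA.isOpen_inter_preimage isOpen_snd_ne (isOpen_Ioi (a := r))
  have he : {z : ℂ × ℂ | z.2 ≠ 0 ∧ r < tA z} =
      {z : ℂ × ℂ | z.2 ≠ 0} ∩ tA ⁻¹' Set.Ioi r := rfl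
  rw [he]; exact h

end openness

section nullslice

lemma slice_null (r : ℝ) : volume {z : ℂ × ℂ | ‖z.2‖ = r} = 0 := by
  have he : {z : ℂ × ℂ | ‖z.2‖ = r} = Set.univ ×ˢ Metric.sphere (0 : ℂ) r := by
    ext z
    simp [Metric.mem_sphere, Complex.dist_eq, norm_nonneg]
  rw [he, MeasureTheory.Measure.volume_eq_prod, Measure.prod_prod, Measure.addHaar_sphere, mul_zero]

lemma sq_eq {x y : ℝ} (hx : 0 ≤ x) (hy : 0 < y) (h : x ^ 2 = y ^ 2) : x = y := by
  nlinarith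

lemma tA_slice_null (v : ℝ) : volume {z : ℂ × ℂ | z.2 ≠ 0 ∧ tA z = v} = 0 := by
  refine measure_mono_null (t := {z : ℂ × ℂ | ‖z.2‖ = Real.exp (v / 2)}) ?_ (slice_null _)
  · rintro z ⟨hz, hv⟩
    have hpos : (0:ℝ) < ‖z.2‖ ^ 2 :=
      pow_pos (norm_pos_iff.mpr hz) 2
    have h2 : ‖z.2‖ ^ 2 = Real.exp v := by
      rw [← Real.exp_log hpos]
      show rexp (tA z) = rexp v
      rw [hv]
    have h3 : Real.exp (v / 2) ^ 2 = Real.exp v := by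
      rw [← Real.exp_nat_mul]
      norm_num
      ring_nf
    exact sq_eq (norm_nonneg _) (Real.exp_pos _) (by rw [h2, ← h3])
end nullslice

section transform

variable {s : ℝ} {b : ℂ}

lemma tA_Tmap (hb : b ≠ 0) (hb2 : ‖b‖ ^ 2 = Real.exp s) (a : ℂ) {z : ℂ × ℂ}
    (hz : z.2 ≠ 0) : tA (Tmap a b z) = s + tA z := by
  have h1 : ‖b * z.2‖ ^ 2 = Real.exp s * ‖z.2‖ ^ 2 := by
    rw [norm_mul, mul_pow, hb2]
  have h2 : ‖z.2‖ ^ 2 ≠ 0 := pow_ne_zero _ (norm_ne_zero_iff.mpr hz)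
  show Real.log (‖b * z.2‖ ^ 2) = s + tA z
  rw [h1, Real.log_mul (Real.exp_ne_zero s) h2, Real.log_exp]
  rfl

lemma Efun_Tmap (hb : b ≠ 0) (hb2 : ‖b‖ ^ 2 = Real.exp s) (η : ℂ) {z : ℂ × ℂ}
    (hz : z.2 ≠ 0) :
    Efun η (Tmap (aex s) b z) = Complex.exp (Complex.I * η * (s : ℂ)) * Efun η z := by
  have ht : ((tA (Tmap (aex s) b z) : ℝ) : ℂ) = (s : ℂ) + (tA z : ℂ) := by
    rw [tA_Tmap hb hb2 (aex s) hz]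
    push_cast
    ring
  rw [Efun_eq, Efun_eq]
  have h1 : (Tmap (aex s) b z).1 = aex s * z.1 := rfl
  rw [h1, ht]
  have hbase : aex s * z.1 * Complex.exp (-Complex.I * ((s : ℂ) + (tA z : ℂ))) =
      z.1 * Complex.exp (-Complex.I * (tA z : ℂ)) := by
    have h2 : aex s * Complex.exp (-Complex.I * ((s : ℂ) + (tA z : ℂ))) =
        Complex.exp (-Complex.I * (tA z : ℂ)) := by
      rw [aex, ← Complex.exp_add]
      congr 1
      ring
    calc aex s * z.1 * Complex.exp (-Complex.I * ((s : ℂ) + (tA z : ℂ)))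
        = z.1 * (aex s * Complex.exp (-Complex.I * ((s : ℂ) + (tA z : ℂ)))) := by ring
      _ = z.1 * Complex.exp (-Complex.I * (tA z : ℂ)) := by rw [h2]
  rw [hbase]
  have h3 : Complex.I * η * ((s : ℂ) + (tA z : ℂ)) =
      Complex.I * η * (s : ℂ) + Complex.I * η * (tA z : ℂ) := by ring
  rw [h3, Complex.exp_add]
  ring

lemma Hfun_Tmap (hb : b ≠ 0) (hb2 : ‖b‖ ^ 2 = Real.exp s)
    (μ c₀ : ℝ) (ℓ : ℕ) (j : ℤ) {z : ℂ × ℂ} (hz : z.2 ≠ 0) :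
    Hfun μ c₀ ℓ j (Tmap (aex s) b z) =
      Complex.exp (Complex.I * ηc μ c₀ ℓ j * (s : ℂ)) * b ^ j * Hfun μ c₀ ℓ j z := by
  rw [Hfun_eq, Hfun_eq, Efun_Tmap hb hb2 _ hz]
  have h2 : (Tmap (aex s) b z).2 = b * z.2 := rfl
  rw [h2, mul_zpow]
  ring

lemma Fprod_Tmap (hb : b ≠ 0) (hb2 : ‖b‖ ^ 2 = Real.exp s)
    (μ c₀ : ℝ) (ℓ ℓ' : ℕ) (j j' : ℤ) {z : ℂ × ℂ} (hz : z.2 ≠ 0) :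
    Hfun μ c₀ ℓ j (Tmap (aex s) b z) *
        (starRingEnd ℂ) (Hfun μ c₀ ℓ' j' (Tmap (aex s) b z)) =
      (Complex.exp (Complex.I * ηc μ c₀ ℓ j * (s : ℂ)) *
        (starRingEnd ℂ) (Complex.exp (Complex.I * ηc μ c₀ ℓ' j' * (s : ℂ))) *
        (b ^ j * ((starRingEnd ℂ) b) ^ j')) *
      (Hfun μ c₀ ℓ j z * (starRingEnd ℂ) (Hfun μ c₀ ℓ' j' z)) := by
  rw [Hfun_Tmap hb hb2 μ c₀ ℓ j hz, Hfun_Tmap hb hb2 μ c₀ ℓ' j' hz, map_mul, map_mul,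
    map_zpow₀]
  ring

lemma abs_cond_Tmap (hb : b ≠ 0) (hb2 : ‖b‖ ^ 2 = Real.exp s) {z : ℂ × ℂ}
    (hz : z.2 ≠ 0) :
    ‖(Tmap (aex s) b z).1 -
        Complex.exp (Complex.I * (tA (Tmap (aex s) b z) : ℂ))‖ =
      ‖z.1 - Complex.exp (Complex.I * (tA z : ℂ))‖ := by
  have ht : ((tA (Tmap (aex s) b z) : ℝ) : ℂ) = (s : ℂ) + (tA z : ℂ) := by
    rw [tA_Tmap hb hb2 (aex s) hz]; push_cast; ring
  have h1 : (Tmap (aex s) b z).1 = aex s * z.1 := rfl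
  rw [h1, ht]
  have h2 : Complex.exp (Complex.I * ((s : ℂ) + (tA z : ℂ))) =
      aex s * Complex.exp (Complex.I * (tA z : ℂ)) := by
    rw [aex, ← Complex.exp_add]
    congr 1
    ring
  rw [h2, show aex s * z.1 - aex s * Complex.exp (Complex.I * (tA z : ℂ)) =
      aex s * (z.1 - Complex.exp (Complex.I * (tA z : ℂ))) by ring, norm_mul, abs_aex, one_mul]

lemma mem_Wset_Tmap (hb : b ≠ 0) (hb2 : ‖b‖ ^ 2 = Real.exp s) (p q : ℝ)
    (z : ℂ × ℂ) :
    Tmap (aex s) b z ∈ Wset (p + s) (q + s) ↔ z ∈ Wset p q := by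
  constructor
  · rintro ⟨h0, h1, h2⟩
    have hz : z.2 ≠ 0 := by
      intro hc
      apply h0
      show b * z.2 = 0
      rw [hc, mul_zero]
    have ht := tA_Tmap hb hb2 (aex s) hz
    refine ⟨hz, ?_, ?_⟩
    · rwa [abs_cond_Tmap hb hb2 hz] at h1
    · rw [ht] at h2
      exact ⟨by linarith [h2.1], by linarith [h2.2]⟩
  · rintro ⟨hz, h1, h2⟩
    have ht := tA_Tmap hb hb2 (aex s) hz
    refine ⟨mul_ne_zero hb hz, ?_, ?_⟩
    · rwa [abs_cond_Tmap hb hb2 hz]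
    · rw [ht]
      exact ⟨by linarith [h2.1], by linarith [h2.2]⟩

lemma image_Wset (hb : b ≠ 0) (hb2 : ‖b‖ ^ 2 = Real.exp s) (p q : ℝ) :
    Tmap (aex s) b '' Wset p q = Wset (p + s) (q + s) := by
  ext w
  constructor
  · rintro ⟨z, hzW, rfl⟩
    exact (mem_Wset_Tmap hb hb2 p q z).2 hzW
  · intro hw
    refine ⟨((aex s)⁻¹ * w.1, b⁻¹ * w.2), ?_, ?_⟩
    · have hTw : Tmap (aex s) b ((aex s)⁻¹ * w.1, b⁻¹ * w.2) = w := by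
        show ((aex s) * ((aex s)⁻¹ * w.1), b * (b⁻¹ * w.2)) = w
        rw [mul_inv_cancel_left₀ (aex_ne s), mul_inv_cancel_left₀ hb]
      apply (mem_Wset_Tmap hb hb2 p q _).1
      rw [hTw]
      exact hw
    · show ((aex s) * ((aex s)⁻¹ * w.1), b * (b⁻¹ * w.2)) = w
      rw [mul_inv_cancel_left₀ (aex_ne s), mul_inv_cancel_left₀ hb]

end transform


instance : (volume : Measure (ℂ × ℂ)).IsAddHaarMeasure :=
  inferInstanceAs (((volume : Measure ℂ).prod (volume : Measure ℂ)).IsAddHaarMeasure)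

section mainA

lemma integral_zero_of_j_ne (μ c₀ : ℝ) (ℓ ℓ' : ℕ) (j j' : ℤ) (hjj : j ≠ j') :
    ∫ z in wormT μ, Hfun μ c₀ ℓ j z * (starRingEnd ℂ) (Hfun μ c₀ ℓ' j' z) = 0 := by
  set F : ℂ × ℂ → ℂ :=
    fun z => Hfun μ c₀ ℓ j z * (starRingEnd ℂ) (Hfun μ c₀ ℓ' j' z) with hF
  set α : ℝ := π / ((j : ℝ) - j') with hα
  set b : ℂ := Complex.exp (Complex.I * (α : ℂ)) with hbdef
  have hb : b ≠ 0 := Complex.exp_ne_zero _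
  have hb2 : ‖b‖ ^ 2 = Real.exp 0 := by
    rw [hbdef]
    simp [Complex.norm_exp]
  have hW : MeasurableSet (wormT μ) := by
    rw [wormT_eq]; exact (isOpen_Wset _ _).measurableSet
  have himg : Tmap (aex 0) b '' wormT μ = wormT μ := by
    rw [wormT_eq, image_Wset hb hb2, add_zero, add_zero]
  have key := integral_image_eq_integral_abs_det_fderiv_smul volume hW
    (fun x _ => (hasFDerivAt_Tmap (aex 0) b x).hasFDerivWithinAt)
    ((inj_Tmap (aex_ne 0) hb).injOn) F
  rw [himg] at key
  have hdet : (TL (aex 0) b).det = 1 := by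
    rw [det_TL, ← Complex.sq_norm, ← Complex.sq_norm, abs_aex, hb2, Real.exp_zero]
    norm_num
  have hFT : Set.EqOn (fun z => |(TL (aex 0) b).det| • F (Tmap (aex 0) b z))
      (fun z => -F z) (wormT μ) := by
    intro z hz
    have hz2 : z.2 ≠ 0 := hz.1
    simp only [hdet, abs_one, one_smul, hF]
    rw [Fprod_Tmap hb hb2 μ c₀ ℓ ℓ' j j' hz2]
    have hcb : (starRingEnd ℂ) b = Complex.exp (-(Complex.I * (α : ℂ))) := by
      rw [hbdef, ← Complex.exp_conj]
      congr 1
      simp [Complex.conj_ofReal]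
    have hbj : b ^ j = Complex.exp ((j : ℂ) * (Complex.I * (α : ℂ))) := by
      rw [Complex.exp_int_mul, hbdef]
    have hbj' : ((starRingEnd ℂ) b) ^ j' =
        Complex.exp ((j' : ℂ) * -(Complex.I * (α : ℂ))) := by
      rw [Complex.exp_int_mul, hcb]
    have hscal : Complex.exp (Complex.I * ηc μ c₀ ℓ j * ((0:ℝ) : ℂ)) *
        (starRingEnd ℂ) (Complex.exp (Complex.I * ηc μ c₀ ℓ' j' * ((0:ℝ) : ℂ))) *
        (b ^ j * ((starRingEnd ℂ) b) ^ j') = -1 := by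
      rw [hbj, hbj', ← Complex.exp_add]
      simp only [Complex.ofReal_zero, mul_zero, Complex.exp_zero, map_one, one_mul]
      rw [← Complex.exp_pi_mul_I]
      congr 1
      have hne : ((j : ℂ) - (j' : ℂ)) ≠ 0 := by
        rw [sub_ne_zero]
        exact_mod_cast hjj
      rw [hα]
      push_cast
      field_simp
      ring
    rw [hscal]
    ring
  rw [setIntegral_congr_fun hW hFT, integral_neg] at key
  exact add_self_eq_zero.mp (by linear_combination key)

end mainA


section mainB

lemma scalar_exp (μ c₀ : ℝ) (hμ : μ ≠ 0) (ℓ ℓ' : ℕ) (j : ℤ) (m : ℤ)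
    (hm : (ℓ : ℝ) - (ℓ' : ℝ) = 2 * (m : ℝ)) (s : ℝ) :
    ((Real.exp s : ℝ) : ℂ) *
      (Complex.exp (Complex.I * ηc μ c₀ ℓ j * (s : ℂ)) *
        (starRingEnd ℂ) (Complex.exp (Complex.I * ηc μ c₀ ℓ' j * (s : ℂ))) *
        ((((Real.exp (s/2) : ℝ) : ℂ)) ^ j *
          ((starRingEnd ℂ) (((Real.exp (s/2) : ℝ) : ℂ))) ^ j)) =
    Complex.exp ((π : ℂ) * (m : ℂ) / (μ : ℂ) * Complex.I * (s : ℂ)) := by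
  have hμC : (μ : ℂ) ≠ 0 := by exact_mod_cast hμ
  have hmC : (ℓ : ℂ) - (ℓ' : ℂ) = 2 * (m : ℂ) := by exact_mod_cast hm
  have hl : (ℓ : ℂ) = 2 * (m : ℂ) + (ℓ' : ℂ) := by linear_combination hmC
  rw [Complex.conj_ofReal, Complex.ofReal_exp s, Complex.ofReal_exp (s/2),
    ← Complex.exp_int_mul, ← Complex.exp_conj,
    ← Complex.exp_add, ← Complex.exp_add]
  rw [← Complex.exp_add]
  rw [← Complex.exp_add]
  congr 1
  simp only [ηc, map_mul, map_add, map_div₀, Complex.conj_I, Complex.conj_ofReal,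
    map_intCast, map_natCast, map_one, map_ofNat]
  push_cast
  rw [hl]
  field_simp
  linear_combination (((1 : ℂ) + (↑j : ℂ)) * (2 * (↑s : ℂ) * (↑μ : ℂ))) * Complex.I_sq

lemma exp_val₁ (μ : ℝ) (hμ : 0 < μ) (m : ℤ) (hm0 : m ≠ 0) :
    Complex.exp ((π : ℂ) * (m : ℂ) / (μ : ℂ) * Complex.I *
      ((μ / |(m : ℝ)| : ℝ) : ℂ)) = -1 := by
  have hμC : (μ : ℂ) ≠ 0 := by exact_mod_cast hμ.ne'
  have hmR : ((m : ℝ)) ≠ 0 := by exact_mod_cast hm0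
  have hmC : ((m : ℂ)) ≠ 0 := by exact_mod_cast hm0
  rcases hmR.lt_or_gt with hneg | hpos
  · have habs : |(m : ℝ)| = -(m : ℝ) := abs_of_neg hneg
    have h1 : (π : ℂ) * (m : ℂ) / (μ : ℂ) * Complex.I * ((μ / |(m : ℝ)| : ℝ) : ℂ) =
        -((π : ℂ) * Complex.I) := by
      rw [habs]
      push_cast
      field_simp [hmC]
    rw [h1, Complex.exp_neg, Complex.exp_pi_mul_I]
    norm_num
  · have habs : |(m : ℝ)| = (m : ℝ) := abs_of_pos hpos
    have h1 : (π : ℂ) * (m : ℂ) / (μ : ℂ) * Complex.I * ((μ / |(m : ℝ)| : ℝ) : ℂ) =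
        (π : ℂ) * Complex.I := by
      rw [habs]
      push_cast
      field_simp [hmC]
    rw [h1, Complex.exp_pi_mul_I]

lemma exp_val₂ (μ : ℝ) (hμ : 0 < μ) (m : ℤ) (hm0 : m ≠ 0) :
    Complex.exp ((π : ℂ) * (m : ℂ) / (μ : ℂ) * Complex.I *
      ((μ / |(m : ℝ)| - 2 * μ : ℝ) : ℂ)) = -1 := by
  have hμC : (μ : ℂ) ≠ 0 := by exact_mod_cast hμ.ne'
  have hsplit : (π : ℂ) * (m : ℂ) / (μ : ℂ) * Complex.I *
      ((μ / |(m : ℝ)| - 2 * μ : ℝ) : ℂ) =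
      (π : ℂ) * (m : ℂ) / (μ : ℂ) * Complex.I * ((μ / |(m : ℝ)| : ℝ) : ℂ) +
        ((-m : ℤ) : ℂ) * (2 * (π : ℂ) * Complex.I) := by
    push_cast
    field_simp
    ring
  rw [hsplit, Complex.exp_add, exp_val₁ μ hμ m hm0, Complex.exp_int_mul_two_pi_mul_I]
  norm_num

lemma abs_ofReal_exp_half_sq (s : ℝ) :
    ‖((Real.exp (s / 2) : ℝ) : ℂ)‖ ^ 2 = Real.exp s := by
  rw [Complex.norm_real, Real.norm_eq_abs, abs_of_pos (Real.exp_pos _), ← Real.exp_nat_mul]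
  norm_num
  ring_nf

lemma union_ae_Wset (p q v : ℝ) (hpv : p ≤ v) (hvq : v ≤ q) :
    (Wset p v ∪ Wset v q : Set (ℂ × ℂ)) =ᵐ[volume] Wset p q := by
  rw [MeasureTheory.ae_eq_set]
  constructor
  · have hsub : Wset p v ∪ Wset v q ⊆ Wset p q := by
      rintro z (⟨h0, h1, h2⟩ | ⟨h0, h1, h2⟩)
      · exact ⟨h0, h1, h2.1, lt_of_lt_of_le h2.2 hvq⟩
      · exact ⟨h0, h1, lt_of_le_of_lt hpv h2.1, h2.2⟩
    rw [Set.diff_eq_empty.mpr hsub]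
    exact measure_empty
  · refine measure_mono_null ?_ (tA_slice_null v)
    rintro z ⟨⟨h0, h1, h2⟩, hnu⟩
    simp only [Set.mem_union, not_or] at hnu
    have hv1 : ¬ (tA z < v) := fun hlt => hnu.1 ⟨h0, h1, h2.1, hlt⟩
    have hv2 : ¬ (v < tA z) := fun hlt => hnu.2 ⟨h0, h1, hlt, h2.2⟩
    exact ⟨h0, le_antisymm (not_lt.1 hv2) (not_lt.1 hv1)⟩

lemma integral_zero_of_l_ne (μ c₀ : ℝ) (hμ : 0 < μ) (ℓ ℓ' : ℕ) (j : ℤ) (m : ℤ)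
    (hm : (ℓ : ℝ) - (ℓ' : ℝ) = 2 * (m : ℝ)) (hm0 : m ≠ 0) :
    ∫ z in wormT μ, Hfun μ c₀ ℓ j z * (starRingEnd ℂ) (Hfun μ c₀ ℓ' j z) = 0 := by
  set F : ℂ × ℂ → ℂ :=
    fun z => Hfun μ c₀ ℓ j z * (starRingEnd ℂ) (Hfun μ c₀ ℓ' j z) with hF
  have hmabs : (1 : ℝ) ≤ |(m : ℝ)| := by
    have := Int.one_le_abs hm0
    calc (1 : ℝ) ≤ ((|m| : ℤ) : ℝ) := by exact_mod_cast this
      _ = |(m : ℝ)| := by push_cast; ring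
  set c : ℝ := μ / |(m : ℝ)| with hc
  have hc0 : 0 < c := div_pos hμ (lt_of_lt_of_le one_pos hmabs)
  have hcμ : c ≤ μ := by
    rw [hc]
    exact div_le_self hμ.le hmabs
  set b₁ : ℂ := ((Real.exp (c / 2) : ℝ) : ℂ) with hb₁
  set b₂ : ℂ := ((Real.exp ((c - 2 * μ) / 2) : ℝ) : ℂ) with hb₂
  have hb₁0 : b₁ ≠ 0 := by
    rw [hb₁]
    exact_mod_cast (Real.exp_pos _).ne'
  have hb₂0 : b₂ ≠ 0 := by
    rw [hb₂]
    exact_mod_cast (Real.exp_pos _).ne'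
  have hb₁2 : ‖b₁‖ ^ 2 = Real.exp c := abs_ofReal_exp_half_sq c
  have hb₂2 : ‖b₂‖ ^ 2 = Real.exp (c - 2 * μ) := abs_ofReal_exp_half_sq _
  set S₁ : Set (ℂ × ℂ) := Wset (-μ) (μ - c) with hS₁
  set S₂ : Set (ℂ × ℂ) := Wset (μ - c) μ with hS₂
  set S : Set (ℂ × ℂ) := S₁ ∪ S₂ with hS
  set Ψ : ℂ × ℂ → ℂ × ℂ :=
    fun z => if tA z < μ - c then Tmap (aex c) b₁ z else Tmap (aex (c - 2 * μ)) b₂ z with hΨ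
  set A' : (ℂ × ℂ) → (ℂ × ℂ) →L[ℝ] (ℂ × ℂ) :=
    fun z => if tA z < μ - c then TL (aex c) b₁ else TL (aex (c - 2 * μ)) b₂ with hA
  have hSmeas : MeasurableSet S := ((isOpen_Wset _ _).union (isOpen_Wset _ _)).measurableSet
  have hder : ∀ x ∈ S, HasFDerivWithinAt Ψ (A' x) S x := by
    intro x hx
    rcases hx with hx | hx
    · have hxt : tA x < μ - c := hx.2.2.2
      have hU : IsOpen {z : ℂ × ℂ | z.2 ≠ 0 ∧ tA z < μ - c} := isOpen_piece _
      have hmem : {z : ℂ × ℂ | z.2 ≠ 0 ∧ tA z < μ - c} ∈ nhds x := hU.mem_nhds ⟨hx.1, hxt⟩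
      have heq : Ψ =ᶠ[nhds x] Tmap (aex c) b₁ :=
        Filter.eventually_of_mem hmem (fun z hz => by simp only [hΨ]; rw [if_pos hz.2])
      have hd : HasFDerivAt Ψ (TL (aex c) b₁) x :=
        (hasFDerivAt_Tmap (aex c) b₁ x).congr_of_eventuallyEq heq
      have hax : A' x = TL (aex c) b₁ := by simp only [hA]; rw [if_pos hxt]
      rw [hax]
      exact hd.hasFDerivWithinAt
    · have hxt : μ - c < tA x := hx.2.2.1
      have hU : IsOpen {z : ℂ × ℂ | z.2 ≠ 0 ∧ μ - c < tA z} := isOpen_piece' _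
      have hmem : {z : ℂ × ℂ | z.2 ≠ 0 ∧ μ - c < tA z} ∈ nhds x := hU.mem_nhds ⟨hx.1, hxt⟩
      have heq : Ψ =ᶠ[nhds x] Tmap (aex (c - 2 * μ)) b₂ :=
        Filter.eventually_of_mem hmem
          (fun z hz => by simp only [hΨ]; rw [if_neg (not_lt.2 hz.2.le)])
      have hd : HasFDerivAt Ψ (TL (aex (c - 2 * μ)) b₂) x :=
        (hasFDerivAt_Tmap (aex (c - 2 * μ)) b₂ x).congr_of_eventuallyEq heq
      have hax : A' x = TL (aex (c - 2 * μ)) b₂ := by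
        simp only [hA]; rw [if_neg (not_lt.2 hxt.le)]
      rw [hax]
      exact hd.hasFDerivWithinAt
  have hmem₁ : ∀ z ∈ S₁, Ψ z ∈ Wset (-μ + c) μ := by
    intro z hz
    have h1 : Ψ z = Tmap (aex c) b₁ z := by simp only [hΨ]; rw [if_pos hz.2.2.2]
    have h2 := (mem_Wset_Tmap hb₁0 hb₁2 (-μ) (μ - c) z).2 hz
    rw [show (μ - c) + c = μ by ring] at h2
    rw [h1]
    exact h2
  have hmem₂ : ∀ z ∈ S₂, Ψ z ∈ Wset (-μ) (-μ + c) := by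
    intro z hz
    have h1 : Ψ z = Tmap (aex (c - 2 * μ)) b₂ z := by
      simp only [hΨ]; rw [if_neg (not_lt.2 hz.2.2.1.le)]
    have h2 := (mem_Wset_Tmap hb₂0 hb₂2 (μ - c) μ z).2 hz
    rw [show (μ - c) + (c - 2 * μ) = -μ by ring, show μ + (c - 2 * μ) = -μ + c by ring] at h2
    rw [h1]
    exact h2
  have hinj : Set.InjOn Ψ S := by
    intro x hx y hy hxy
    rcases hx with hx | hx <;> rcases hy with hy | hy
    · have e1 : Ψ x = Tmap (aex c) b₁ x := by simp only [hΨ]; rw [if_pos hx.2.2.2]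
      have e2 : Ψ y = Tmap (aex c) b₁ y := by simp only [hΨ]; rw [if_pos hy.2.2.2]
      exact inj_Tmap (aex_ne c) hb₁0 (by rw [← e1, ← e2, hxy])
    · exfalso
      have h1 := hmem₁ x hx
      have h2 := hmem₂ y hy
      rw [hxy] at h1
      have := h1.2.2.1
      have := h2.2.2.2
      linarith
    · exfalso
      have h1 := hmem₁ y hy
      have h2 := hmem₂ x hx
      rw [hxy] at h2
      have := h1.2.2.1
      have := h2.2.2.2
      linarith
    · have e1 : Ψ x = Tmap (aex (c - 2 * μ)) b₂ x := by
        simp only [hΨ]; rw [if_neg (not_lt.2 hx.2.2.1.le)]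
      have e2 : Ψ y = Tmap (aex (c - 2 * μ)) b₂ y := by
        simp only [hΨ]; rw [if_neg (not_lt.2 hy.2.2.1.le)]
      exact inj_Tmap (aex_ne _) hb₂0 (by rw [← e1, ← e2, hxy])
  have himg : Ψ '' S = Wset (-μ) (-μ + c) ∪ Wset (-μ + c) μ := by
    rw [hS, Set.image_union]
    have h1 : Ψ '' S₁ = Tmap (aex c) b₁ '' S₁ :=
      Set.image_congr (fun z hz => by simp only [hΨ]; rw [if_pos hz.2.2.2])
    have h2 : Ψ '' S₂ = Tmap (aex (c - 2 * μ)) b₂ '' S₂ :=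
      Set.image_congr (fun z hz => by simp only [hΨ]; rw [if_neg (not_lt.2 hz.2.2.1.le)])
    rw [h1, h2, hS₁, hS₂, image_Wset hb₁0 hb₁2, image_Wset hb₂0 hb₂2,
      show (μ - c) + c = μ by ring, show (μ - c) + (c - 2 * μ) = -μ by ring,
      show μ + (c - 2 * μ) = -μ + c by ring]
    exact Set.union_comm _ _
  have hae₁ : S =ᵐ[volume] Wset (-μ) μ := by
    rw [hS, hS₁, hS₂]
    exact union_ae_Wset (-μ) μ (μ - c) (by linarith) (by linarith)
  have hae₂ : Ψ '' S =ᵐ[volume] Wset (-μ) μ := by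
    rw [himg]
    exact union_ae_Wset (-μ) μ (-μ + c) (by linarith) (by linarith)
  have key := integral_image_eq_integral_abs_det_fderiv_smul volume hSmeas hder hinj F
  have hFT : Set.EqOn (fun z => |(A' z).det| • F (Ψ z)) (fun z => -F z) S := by
    intro z hz
    have hz2 : z.2 ≠ 0 := by
      rcases hz with hz | hz
      exacts [hz.1, hz.1]
    rcases hz with hz | hz
    · have e1 : Ψ z = Tmap (aex c) b₁ z := by simp only [hΨ]; rw [if_pos hz.2.2.2]
      have e2 : A' z = TL (aex c) b₁ := by simp only [hA]; rw [if_pos hz.2.2.2]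
      have hdet : (TL (aex c) b₁).det = Real.exp c := by
        rw [det_TL, ← Complex.sq_norm, ← Complex.sq_norm, abs_aex, hb₁2]
        norm_num
      simp only [e1, e2, hdet, abs_of_pos (Real.exp_pos c), hF]
      rw [Fprod_Tmap hb₁0 hb₁2 μ c₀ ℓ ℓ' j j hz2, Complex.real_smul, ← mul_assoc,
        show ((Real.exp c : ℝ) : ℂ) *
          (Complex.exp (Complex.I * ηc μ c₀ ℓ j * ((c : ℝ) : ℂ)) *
            (starRingEnd ℂ) (Complex.exp (Complex.I * ηc μ c₀ ℓ' j * ((c : ℝ) : ℂ))) *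
            (b₁ ^ j * ((starRingEnd ℂ) b₁) ^ j)) =
          Complex.exp ((π : ℂ) * (m : ℂ) / (μ : ℂ) * Complex.I * ((c : ℝ) : ℂ)) from
          scalar_exp μ c₀ hμ.ne' ℓ ℓ' j m hm c, hc, exp_val₁ μ hμ m hm0]
      ring
    · have e1 : Ψ z = Tmap (aex (c - 2 * μ)) b₂ z := by
        simp only [hΨ]; rw [if_neg (not_lt.2 hz.2.2.1.le)]
      have e2 : A' z = TL (aex (c - 2 * μ)) b₂ := by
        simp only [hA]; rw [if_neg (not_lt.2 hz.2.2.1.le)]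
      have hdet : (TL (aex (c - 2 * μ)) b₂).det = Real.exp (c - 2 * μ) := by
        rw [det_TL, ← Complex.sq_norm, ← Complex.sq_norm, abs_aex, hb₂2]
        norm_num
      simp only [e1, e2, hdet, abs_of_pos (Real.exp_pos (c - 2 * μ)), hF]
      rw [Fprod_Tmap hb₂0 hb₂2 μ c₀ ℓ ℓ' j j hz2, Complex.real_smul, ← mul_assoc,
        show ((Real.exp (c - 2 * μ) : ℝ) : ℂ) *
          (Complex.exp (Complex.I * ηc μ c₀ ℓ j * ((c - 2 * μ : ℝ) : ℂ)) *
            (starRingEnd ℂ) (Complex.exp (Complex.I * ηc μ c₀ ℓ' j * ((c - 2 * μ : ℝ) : ℂ))) *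
            (b₂ ^ j * ((starRingEnd ℂ) b₂) ^ j)) =
          Complex.exp ((π : ℂ) * (m : ℂ) / (μ : ℂ) * Complex.I * ((c - 2 * μ : ℝ) : ℂ)) from
          scalar_exp μ c₀ hμ.ne' ℓ ℓ' j m hm (c - 2 * μ), hc, exp_val₂ μ hμ m hm0]
      ring
  rw [setIntegral_congr_fun hSmeas hFT, integral_neg, setIntegral_congr_set hae₂,
    setIntegral_congr_set hae₁, ← wormT_eq] at key
  exact add_self_eq_zero.mp (by linear_combination key)

end mainB

end WormProof

end WormAux

theorem Hfun_orthogonal_systems (μ c₀ : ℝ) (hμ : 0 < μ) (hc₀ : -1 < c₀)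
    (k k' : ℕ) (j j' : ℤ) (h : (k, j) ≠ (k', j')) :
    (∫ z in wormT μ, Hfun μ c₀ (2 * k) j z * (starRingEnd ℂ) (Hfun μ c₀ (2 * k') j' z) = 0) ∧
    (∫ z in wormT μ,
        Hfun μ c₀ (2 * k + 1) j z * (starRingEnd ℂ) (Hfun μ c₀ (2 * k' + 1) j' z) = 0) := by
  by_cases hjj : j = j'
  · subst hjj
    have hkk : k ≠ k' := by
      intro hk
      exact h (by rw [hk])
    have hm0 : ((k : ℤ) - (k' : ℤ)) ≠ 0 := sub_ne_zero.2 (by exact_mod_cast hkk)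
    constructor
    · exact WormProof.integral_zero_of_l_ne μ c₀ hμ (2 * k) (2 * k') j ((k : ℤ) - k')
        (by push_cast; ring) hm0
    · exact WormProof.integral_zero_of_l_ne μ c₀ hμ (2 * k + 1) (2 * k' + 1) j ((k : ℤ) - k')
        (by push_cast; ring) hm0
  · exact ⟨WormProof.integral_zero_of_j_ne μ c₀ _ _ j j' hjj,
      WormProof.integral_zero_of_j_ne μ c₀ _ _ j j' hjj⟩
end

section
/- Let λ ∈ ℂ with Re λ > -1. Then for every ξ > 0, (1/2π) ∫_{−∞}^{+∞} (u+i)^{−(λ+2)} e^{−iξu} du = ξ^{λ+1} e^{−ξ} / (i^{λ+2} Γ(λ+2)), and for every ξ < 0 the integral (1/2π) ∫_{−∞}^{+∞} (u+i)^{−(λ+2)} e^{−iξu} du equals 0. Here the integral is over u ∈ ℝ and is absolutely convergent. -/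
open MeasureTheory Real Set Filter
open scoped FourierTransform Topology

namespace FourierCpowAux

open Complex

/-- Integrability of `t^w e^{-zt}` on `(0,∞)` when `Re w > -1` and `Re z = 1`. -/
lemma integrableOn_cpow_mul_exp {w : ℂ} (hw : -1 < w.re) {z : ℂ} (hz : z.re = 1) :
    IntegrableOn (fun t : ℝ => (t : ℂ) ^ w * Complex.exp (-z * t)) (Ioi 0) := by
  constructor
  · apply ContinuousOn.aestronglyMeasurable _ measurableSet_Ioi
    intro t ht
    refine ContinuousWithinAt.mul ?_ ?_
    · exact (continuousAt_ofReal_cpow_const t w (Or.inr (ne_of_gt ht))).continuousWithinAt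
    · exact (Complex.continuous_exp.comp (by continuity)).continuousAt.continuousWithinAt
  · apply HasFiniteIntegral.mono'
      (Real.GammaIntegral_convergent (show (0:ℝ) < w.re + 1 by linarith)).2
    refine (ae_restrict_iff' measurableSet_Ioi).mpr (Eventually.of_forall fun t ht => ?_)
    rw [mem_Ioi] at ht
    rw [norm_mul,
      Complex.norm_cpow_eq_rpow_re_of_pos ht, Complex.norm_exp]
    have : (-z * (t:ℂ)).re = -t := by simp [hz]
    rw [this, add_sub_cancel_right]
    rw [mul_comm]

end FourierCpowAux

namespace FourierCpowAux
open Complex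

lemma parts {s : ℂ} (hs : 0 < s.re) {z : ℂ} (hz : z.re = 1) :
    ∫ t in Ioi (0:ℝ), (s * (t:ℂ) ^ (s-1) * Complex.exp (-z * t)
      - z * ((t:ℂ) ^ s * Complex.exp (-z * t))) = 0 := by
  have hs0 : s ≠ 0 := fun h => by simp [h] at hs
  have key := integral_Ioi_of_hasDerivAt_of_tendsto (a := (0:ℝ))
    (f := fun t : ℝ => (t:ℂ) ^ s * Complex.exp (-z * t))
    (f' := fun t : ℝ => s * (t:ℂ) ^ (s-1) * Complex.exp (-z * t)
      - z * ((t:ℂ) ^ s * Complex.exp (-z * t)))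
    (m := 0) ?_ ?_ ?_ ?_
  · rw [key]
    simp [Complex.zero_cpow hs0]
  · -- continuity at 0 within Ici 0
    refine ContinuousWithinAt.mul ?_ ?_
    · exact (continuousAt_ofReal_cpow_const 0 s (Or.inl hs)).continuousWithinAt
    · exact (Complex.continuous_exp.comp (by continuity)).continuousAt.continuousWithinAt
  · -- derivative
    intro t ht
    rw [mem_Ioi] at ht
    have h1 : HasDerivAt (fun y : ℝ => (y:ℂ) ^ s) (s * (t:ℂ) ^ (s-1)) t := by
      have := (HasDerivAt.cpow_const (c := s) (hasDerivAt_id ((t:ℝ):ℂ))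
        (Complex.ofReal_mem_slitPlane.2 ht)).comp_ofReal (z := t)
      simpa using this
    have h2 : HasDerivAt (fun y : ℝ => Complex.exp (-z * y))
        (Complex.exp (-z * t) * (-z)) t := by
      have he : HasDerivAt (fun y : ℂ => Complex.exp (-z * y))
          (Complex.exp (-z * t) * (-z)) (t:ℂ) := by
        simpa [mul_comm] using (((hasDerivAt_id (t:ℂ)).const_mul (-z)).cexp)
      exact he.comp_ofReal
    have := h1.mul h2
    refine this.congr_deriv ?_
    ring
  · -- integrability of f'
    apply Integrable.sub
    · have := (integrableOn_cpow_mul_exp (w := s - 1) (by simp; linarith) hz).const_mul s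
      simpa [mul_assoc] using this
    · exact ((integrableOn_cpow_mul_exp (w := s)
        (by linarith) hz).const_mul z)
  · -- tendsto 0
    apply squeeze_zero_norm' (a := fun t : ℝ => t ^ s.re * Real.exp (-1 * t))
    · filter_upwards [Ioi_mem_atTop (0:ℝ)] with t ht
      rw [mem_Ioi] at ht
      rw [norm_mul,
        Complex.norm_cpow_eq_rpow_re_of_pos ht, Complex.norm_exp]
      have : (-z * (t:ℂ)).re = -1 * t := by simp [hz]
      rw [this]
    · simpa using tendsto_rpow_mul_exp_neg_mul_atTop_nhds_zero s.re 1 one_pos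

end FourierCpowAux

namespace FourierCpowAux
open Complex

lemma z_re (a : ℝ) : ((1:ℂ) + a * I).re = 1 := by simp

lemma z_ne (a : ℝ) : ((1:ℂ) + a * I) ≠ 0 := by
  intro h
  have := congrArg Complex.re h
  simp at this

lemma hasDerivAt_phi {s : ℂ} (hs : 0 < s.re) (a : ℝ) :
    HasDerivAt (fun x : ℝ => ∫ t in Ioi (0:ℝ), (t:ℂ) ^ (s - 1) * Complex.exp (-(1 + x * I) * t))
      (∫ t in Ioi (0:ℝ), (t:ℂ) ^ (s - 1) * Complex.exp (-(1 + a * I) * t) * (-(I * t))) a := by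
  have hsub : (-1:ℝ) < (s-1).re := by simp; linarith
  have key := hasDerivAt_integral_of_dominated_loc_of_deriv_le (μ := volume.restrict (Ioi (0:ℝ)))
    (F := fun (x : ℝ) (t : ℝ) => (t:ℂ) ^ (s - 1) * Complex.exp (-(1 + x * I) * t))
    (F' := fun (x : ℝ) (t : ℝ) => (t:ℂ) ^ (s - 1) * Complex.exp (-(1 + x * I) * t) * (-(I * t)))
    (x₀ := a) (s := Metric.ball a 1) (bound := fun t => Real.exp (-t) * t ^ (s.re + 1 - 1))
    (Metric.ball_mem_nhds a one_pos)
    (Eventually.of_forall fun x => (integrableOn_cpow_mul_exp hsub (z_re x)).1)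
    (integrableOn_cpow_mul_exp hsub (z_re a))
    ?_ ?_ ?_ ?_
  · exact key.2
  · -- measurability of F' a
    apply AEStronglyMeasurable.mul (integrableOn_cpow_mul_exp hsub (z_re a)).1
    exact (Continuous.aestronglyMeasurable (by continuity))
  · -- bound
    refine (ae_restrict_iff' measurableSet_Ioi).mpr (Eventually.of_forall fun t ht => ?_)
    intro x _
    rw [mem_Ioi] at ht
    rw [norm_mul, norm_mul,
      Complex.norm_cpow_eq_rpow_re_of_pos ht, Complex.norm_exp]
    have h1 : (-(1 + (x:ℂ) * I) * t).re = -t := by simp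
    have h2 : ‖-(I * (t:ℂ))‖ = t := by
      simpa using abs_of_pos ht
    rw [h1, h2]
    show t ^ (s-1).re * Real.exp (-t) * t ≤ Real.exp (-t) * t ^ (s.re + 1 - 1)
    rw [show s.re + 1 - 1 = (s-1).re + 1 by simp,
      Real.rpow_add_one (ne_of_gt ht)]
    apply le_of_eq
    ring
  · exact Real.GammaIntegral_convergent (by linarith)
  · -- differentiability in x
    refine (ae_restrict_iff' measurableSet_Ioi).mpr (Eventually.of_forall fun t ht => ?_)
    intro x _
    rw [mem_Ioi] at ht
    have inner : HasDerivAt (fun z : ℂ => -(1 + z * I) * t) (-(I * t)) (x:ℂ) := by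
      have := (((hasDerivAt_id ((x:ℝ):ℂ)).mul_const I).const_add 1).neg.mul_const (t:ℂ)
      refine this.congr_deriv ?_
      ring
    have hc : HasDerivAt (fun z : ℂ => (t:ℂ) ^ (s - 1) * Complex.exp (-(1 + z * I) * t))
        ((t:ℂ) ^ (s - 1) * (Complex.exp (-(1 + (x:ℂ) * I) * t) * (-(I * t)))) (x:ℂ) :=
      (inner.cexp).const_mul _
    have := hc.comp_ofReal
    refine this.congr_deriv ?_
    ring

lemma keyB {s : ℂ} (hs : 0 < s.re) (a : ℝ) :
    ∫ t in Ioi (0:ℝ), (t:ℂ) ^ (s - 1) * Complex.exp (-(1 + a * I) * t)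
      = Complex.Gamma s * ((1:ℂ) + a * I) ^ (-s) := by
  have hs0 : s ≠ 0 := fun h => by simp [h] at hs
  have hsub : (-1:ℝ) < (s-1).re := by simp; linarith
  set φ : ℝ → ℂ :=
    fun x => ∫ t in Ioi (0:ℝ), (t:ℂ) ^ (s - 1) * Complex.exp (-(1 + x * I) * t) with hφdef
  set T : ℝ → ℂ :=
    fun x => ∫ t in Ioi (0:ℝ), (t:ℂ) ^ s * Complex.exp (-(1 + x * I) * t) with hTdef
  -- relation from integration by parts : s * φ x = (1+xI) * T x
  have hrel : ∀ x : ℝ, s * φ x = (1 + (x:ℂ) * I) * T x := by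
    intro x
    have hp := parts hs (z_re x)
    have h1 : IntegrableOn (fun t : ℝ => s * ((t:ℂ) ^ (s-1) * Complex.exp (-(1 + x * I) * t)))
        (Ioi 0) := (integrableOn_cpow_mul_exp hsub (z_re x)).const_mul s
    have h2 : IntegrableOn
        (fun t : ℝ => (1 + (x:ℂ) * I) * ((t:ℂ) ^ s * Complex.exp (-(1 + x * I) * t)))
        (Ioi 0) := (integrableOn_cpow_mul_exp (by linarith : (-1:ℝ) < s.re) (z_re x)).const_mul _
    rw [show (fun t : ℝ => s * (t:ℂ) ^ (s-1) * Complex.exp (-(1 + x * I) * t)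
        - (1 + (x:ℂ) * I) * ((t:ℂ) ^ s * Complex.exp (-(1 + x * I) * t)))
      = (fun t : ℝ => s * ((t:ℂ) ^ (s-1) * Complex.exp (-(1 + x * I) * t))
        - (1 + (x:ℂ) * I) * ((t:ℂ) ^ s * Complex.exp (-(1 + x * I) * t))) by
        funext t; ring] at hp
    rw [integral_sub h1 h2, integral_const_mul, integral_const_mul, sub_eq_zero] at hp
    exact hp
  -- derivative of φ
  have hφ' : ∀ x : ℝ, HasDerivAt φ (-I * T x) x := by
    intro x
    have := hasDerivAt_phi hs x
    convert this using 1
    rw [hTdef]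
    simp only
    rw [← integral_const_mul]
    refine setIntegral_congr_fun measurableSet_Ioi (fun t ht => ?_)
    rw [mem_Ioi] at ht
    have ht0 : (t:ℂ) ≠ 0 := ofReal_ne_zero.mpr (ne_of_gt ht)
    have h3 : (t:ℂ) ^ s = (t:ℂ) ^ (s - 1) * t := by
      have := (cpow_add (x := (t:ℂ)) (s-1) 1 ht0).symm
      simpa using this.symm
    rw [h3]
    ring
  -- ψ is constant
  have hψ : ∀ x : ℝ, HasDerivAt (fun x : ℝ => ((1:ℂ) + x * I) ^ s * φ x) 0 x := by
    intro x
    have inner : HasDerivAt (fun z : ℂ => (1 + z * I) ^ s)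
        (s * ((1:ℂ) + x * I) ^ (s - 1) * I) (x:ℂ) := by
      refine HasDerivAt.cpow_const ?_ ?_
      · simpa using ((hasDerivAt_id ((x:ℝ):ℂ)).mul_const I).const_add 1
      · rw [Complex.mem_slitPlane_iff]
        left; rw [z_re]; norm_num
    have houter : HasDerivAt (fun x : ℝ => ((1:ℂ) + x * I) ^ s)
        (s * ((1:ℂ) + x * I) ^ (s - 1) * I) x := inner.comp_ofReal
    have hmul := houter.mul (hφ' x)
    refine hmul.congr_deriv ?_
    symm
    have e1 := hrel x
    have e2 : ((1:ℂ) + x * I) ^ s = ((1:ℂ) + x * I) ^ (s - 1) * ((1:ℂ) + x * I) := by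
      have := (cpow_add (x := (1:ℂ) + (x:ℂ) * I) (s-1) 1 (z_ne x)).symm
      simpa using this.symm
    rw [e2]
    linear_combination (-(I : ℂ) * ((1:ℂ) + x * I) ^ (s - 1)) * e1
  have hconst : ((1:ℂ) + a * I) ^ s * φ a = ((1:ℂ) + (0:ℝ) * I) ^ s * φ 0 :=
    is_const_of_deriv_eq_zero (fun x => (hψ x).differentiableAt)
      (fun x => (hψ x).deriv) a 0
  have hφ0 : φ 0 = Complex.Gamma s := by
    rw [Complex.Gamma_eq_integral hs, Complex.GammaIntegral, hφdef]
    refine setIntegral_congr_fun measurableSet_Ioi (fun t ht => ?_)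
    rw [show (-(1 + ((0:ℝ):ℂ) * I) * (t:ℂ)) = ((-t : ℝ) : ℂ) by push_cast; ring]
    rw [← Complex.ofReal_exp]
    ring
  have h0 : ((1:ℂ) + ((0:ℝ):ℂ) * I) ^ s = 1 := by
    norm_num
  rw [h0, one_mul, hφ0] at hconst
  have hzs : ((1:ℂ) + a * I) ^ s ≠ 0 := by
    rw [Ne, cpow_eq_zero_iff]
    push_neg
    intro h; exact absurd h (z_ne a)
  rw [cpow_neg, eq_mul_inv_iff_mul_eq₀ hzs, mul_comm]
  exact hconst

end FourierCpowAux

namespace FourierCpowAux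
open Complex

lemma norm_cpow_neg_le (s : ℂ) (hs : 0 ≤ s.re) {z : ℂ} {u : ℝ}
    (hz : Real.sqrt (1 + u^2) ≤ ‖z‖) :
    ‖z ^ (-s)‖ ≤ Real.exp (π * |s.im|) * (1 + u^2) ^ (-(s.re)/2) := by
  have h1u : (0:ℝ) < 1 + u^2 := by positivity
  have hsq : (0:ℝ) < Real.sqrt (1 + u^2) := Real.sqrt_pos.mpr h1u
  have hz0 : z ≠ 0 := by
    intro h
    rw [h, norm_zero] at hz
    linarith
  rw [Complex.norm_cpow_of_ne_zero hz0]
  have he : Real.exp ((z.arg) * (-s).im) = Real.exp (-(z.arg * s.im)) := by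
    rw [Complex.neg_im, mul_neg]
  rw [he, Real.exp_neg, div_eq_mul_inv, inv_inv]
  have hre : (-s).re = -s.re := by simp
  rw [hre]
  have h1 : ‖z‖ ^ (-s.re) ≤ (1 + u^2) ^ (-(s.re)/2) := by
    have : Real.sqrt (1 + u^2) ^ (-s.re) = (1 + u^2) ^ (-(s.re)/2) := by
      rw [Real.sqrt_eq_rpow, ← Real.rpow_mul (le_of_lt h1u)]
      congr 1
      ring
    rw [← this]
    exact Real.rpow_le_rpow_of_nonpos hsq hz (neg_nonpos.mpr hs)
  have h2 : Real.exp (z.arg * s.im) ≤ Real.exp (π * |s.im|) := by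
    apply Real.exp_le_exp.mpr
    calc z.arg * s.im ≤ |z.arg * s.im| := le_abs_self _
      _ = |z.arg| * |s.im| := abs_mul _ _
      _ ≤ π * |s.im| := by
          apply mul_le_mul_of_nonneg_right (Complex.abs_arg_le_pi z) (abs_nonneg _)
  calc ‖z‖ ^ (-s.re) * Real.exp (z.arg * s.im)
      ≤ (1 + u^2) ^ (-(s.re)/2) * Real.exp (π * |s.im|) := by
        apply mul_le_mul h1 h2 (le_of_lt (Real.exp_pos _)) (by positivity)
    _ = Real.exp (π * |s.im|) * (1 + u^2) ^ (-(s.re)/2) := mul_comm _ _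

lemma integrable_master {s : ℂ} (hs : 1 < s.re) {f : ℝ → ℂ} {c : ℝ}
    (hmeas : AEStronglyMeasurable f (volume : Measure ℝ))
    (hbound : ∀ u : ℝ, ‖f u‖ ≤ c * (1 + u^2) ^ (-(s.re)/2)) :
    Integrable f := by
  have hint : Integrable (fun u : ℝ => ((1:ℝ) + ‖u‖^2) ^ (-(s.re)/2)) := by
    apply integrable_rpow_neg_one_add_norm_sq
    simpa using hs
  apply Integrable.mono' (hint.const_mul c) hmeas
  refine Eventually.of_forall fun u => ?_
  have := hbound u
  simpa [Real.norm_eq_abs, sq_abs] using this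

lemma I_mul_cpow {w : ℂ} (hw : 0 < w.re) (c : ℂ) : (I * w) ^ c = I ^ c * w ^ c := by
  have hw0 : w ≠ 0 := fun h => by simp [h] at hw
  have hIw : I * w ≠ 0 := mul_ne_zero I_ne_zero hw0
  have harg : I.arg + w.arg ∈ Ioc (-π) π := by
    have h2 : |w.arg| < π / 2 := Complex.abs_arg_lt_pi_div_two_iff.mpr (Or.inl hw)
    rw [abs_lt] at h2
    rw [Complex.arg_I]
    constructor
    · have := Real.pi_pos; linarith [h2.1]
    · linarith [h2.2]
  rw [cpow_def_of_ne_zero hIw, Complex.log_mul I_ne_zero hw0 harg, add_mul, Complex.exp_add,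
    ← cpow_def_of_ne_zero I_ne_zero, ← cpow_def_of_ne_zero hw0]

end FourierCpowAux

open FourierCpowAux Complex

/-- The Fourier transform of `(u+i)^{-(λ+2)}`: it is `ξ^{λ+1} e^{-ξ} / (i^{λ+2} Γ(λ+2))`
for `ξ > 0` and vanishes for `ξ < 0`. -/
theorem fourier_transform_cpow (l : ℂ) (hl : -1 < l.re) :
    (∀ ξ : ℝ, MeasureTheory.Integrable
        (fun u : ℝ => ((u : ℂ) + Complex.I) ^ (-(l + 2)) *
          Complex.exp (-Complex.I * (ξ : ℂ) * (u : ℂ)))) ∧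
    (∀ ξ : ℝ, 0 < ξ →
      (1 / (2 * (π : ℂ))) *
          ∫ u : ℝ, ((u : ℂ) + Complex.I) ^ (-(l + 2)) *
            Complex.exp (-Complex.I * (ξ : ℂ) * (u : ℂ)) =
        (ξ : ℂ) ^ (l + 1) * Complex.exp (-(ξ : ℂ)) /
          (Complex.I ^ (l + 2) * Complex.Gamma (l + 2))) ∧
    (∀ ξ : ℝ, ξ < 0 →
      (1 / (2 * (π : ℂ))) *
          ∫ u : ℝ, ((u : ℂ) + Complex.I) ^ (-(l + 2)) *
            Complex.exp (-Complex.I * (ξ : ℂ) * (u : ℂ)) = 0) := by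
  set s : ℂ := l + 2 with hsdef
  have hs1 : 1 < s.re := by simp [hsdef]; linarith
  have hs0 : 0 < s.re := by linarith
  have hsub : (-1:ℝ) < (s - 1).re := by simp; linarith
  have hΓ : Complex.Gamma s ≠ 0 := by
    apply Complex.Gamma_ne_zero
    intro m h
    have h2 := congrArg Complex.re h
    simp at h2
    have h3 : (0:ℝ) ≤ (m:ℝ) := Nat.cast_nonneg m
    linarith
  have hexp1 : ∀ (ξ u : ℝ), ‖Complex.exp (-Complex.I * ξ * u)‖ = 1 := by
    intro ξ u
    rw [Complex.norm_exp]
    have : (-Complex.I * (ξ:ℂ) * (u:ℂ)).re = 0 := by simp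
    rw [this, Real.exp_zero]
  -- part 1 : integrability
  have hInt : ∀ ξ : ℝ, MeasureTheory.Integrable
      (fun u : ℝ => ((u : ℂ) + Complex.I) ^ (-s) *
        Complex.exp (-Complex.I * (ξ : ℂ) * (u : ℂ))) := by
    intro ξ
    apply integrable_master hs1 (c := Real.exp (π * |s.im|))
    · apply Continuous.aestronglyMeasurable
      apply Continuous.mul
      · rw [continuous_iff_continuousAt]
        intro u
        exact (ContinuousAt.cpow (f := fun x : ℝ => (x:ℂ) + I)
          ((Complex.continuous_ofReal.add continuous_const).continuousAt)
          continuousAt_const (Or.inr (by simp)) :)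
      · fun_prop
    · intro u
      rw [norm_mul, hexp1 ξ u, mul_one]
      have habs : Real.sqrt (1 + u^2) ≤ ‖(u:ℂ) + I‖ := by
        have h4 : ((u:ℂ) + I) = (u:ℂ) + (1:ℝ) * I := by simp
        rw [h4, Complex.norm_add_mul_I]
        rw [show (1:ℝ)^2 = 1 by norm_num, add_comm]
      simpa using norm_cpow_neg_le s (le_of_lt hs0) habs
  -- setup for parts 2-3
  have hg_int : MeasureTheory.Integrable
      (Set.indicator (Ioi (0:ℝ)) (fun t : ℝ => (t:ℂ) ^ (s-1) * Complex.exp (-(1:ℂ) * t))) :=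
    (integrableOn_cpow_mul_exp hsub (by simp)).integrable_indicator measurableSet_Ioi
  set g : ℝ → ℂ :=
    Set.indicator (Ioi (0:ℝ)) (fun t : ℝ => (t:ℂ) ^ (s-1) * Complex.exp (-(1:ℂ) * t)) with hgdef
  have h𝓕 : 𝓕 g = fun u : ℝ => Complex.Gamma s * ((1:ℂ) + (2*π*u : ℝ) * I) ^ (-s) := by
    funext u
    rw [Real.fourier_real_eq_integral_exp_smul]
    rw [← keyB hs0 (2*π*u), ← integral_indicator measurableSet_Ioi]
    congr 1
    funext v
    by_cases hv : v ∈ Ioi (0:ℝ)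
    · rw [Set.indicator_of_mem hv, hgdef, Set.indicator_of_mem hv, smul_eq_mul,
        ← mul_assoc, mul_comm (Complex.exp _) ((v:ℂ) ^ (s-1)), mul_assoc, ← Complex.exp_add]
      congr 2
      push_cast
      ring
    · rw [Set.indicator_of_notMem hv, hgdef, Set.indicator_of_notMem hv, smul_zero]
  have h𝓕int : MeasureTheory.Integrable (𝓕 g) := by
    rw [h𝓕]
    apply integrable_master hs1 (c := ‖Complex.Gamma s‖ * Real.exp (π * |s.im|))
    · apply Continuous.aestronglyMeasurable
      apply continuous_const.mul
      rw [continuous_iff_continuousAt]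
      intro u
      exact (ContinuousAt.cpow (f := fun x : ℝ => (1:ℂ) + (2*π*x : ℝ) * I)
        ((continuous_const.add ((Complex.continuous_ofReal.comp
          (continuous_const.mul continuous_id)).mul continuous_const)).continuousAt)
        continuousAt_const (Or.inl (by simp)) :)
    · intro u
      rw [norm_mul]
      have habs : Real.sqrt (1 + u^2) ≤ ‖(1:ℂ) + (2*π*u : ℝ) * I‖ := by
        rw [show ((1:ℂ) + (2*π*u : ℝ) * I) = ((1:ℝ):ℂ) + (2*π*u : ℝ) * I by simp,
          Complex.norm_add_mul_I]
        apply Real.sqrt_le_sqrt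
        rw [show (1:ℝ)^2 = 1 by norm_num]
        have hpi : (3:ℝ) < π := Real.pi_gt_three
        nlinarith [mul_nonneg (show (0:ℝ) ≤ 4*π^2 - 1 by nlinarith) (sq_nonneg u)]
      have hb := norm_cpow_neg_le s (le_of_lt hs0) habs
      calc ‖Complex.Gamma s‖ * ‖((1:ℂ) + (2*π*u : ℝ) * I) ^ (-s)‖
          ≤ ‖Complex.Gamma s‖ * (Real.exp (π * |s.im|) * (1 + u^2) ^ (-(s.re)/2)) := by
            apply mul_le_mul_of_nonneg_left hb (norm_nonneg _)
        _ = ‖Complex.Gamma s‖ * Real.exp (π * |s.im|) * (1 + u^2) ^ (-(s.re)/2) := by ring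
  -- main identity for continuity points
  have hmain : ∀ ξ : ℝ, ContinuousAt g ξ →
      (1 / (2 * (π : ℂ))) *
        ∫ u : ℝ, ((u : ℂ) + Complex.I) ^ (-s) *
          Complex.exp (-Complex.I * (ξ : ℂ) * (u : ℂ))
      = I ^ (-s) * g ξ / Complex.Gamma s := by
    intro ξ hcont
    have hinv : 𝓕⁻ (𝓕 g) ξ = g ξ := hg_int.fourierInv_fourier_eq h𝓕int hcont
    rw [Real.fourierInv_eq_fourier_neg,
      Real.fourier_real_eq_integral_exp_smul] at hinv
    have hcv := MeasureTheory.Measure.integral_comp_mul_left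
      (fun v : ℝ => ((v:ℂ) + Complex.I) ^ (-s) *
        Complex.exp (-Complex.I * (ξ : ℂ) * (v : ℂ))) (-(2*π))
    have hptwise : ∀ u : ℝ,
        ((((-(2*π)*u : ℝ)):ℂ) + Complex.I) ^ (-s) *
          Complex.exp (-Complex.I * (ξ : ℂ) * ((-(2*π)*u : ℝ) : ℂ))
        = I ^ (-s) * (Complex.Gamma s)⁻¹ *
          (Complex.exp ((↑(-2 * π * u * -ξ) : ℝ) * Complex.I) •
            (Complex.Gamma s * ((1:ℂ) + (2*π*u : ℝ) * I) ^ (-s))) := by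
      intro u
      have hfac : (((-(2*π)*u : ℝ)):ℂ) + Complex.I = I * ((1:ℂ) + (2*π*u : ℝ) * I) := by
        have : (I:ℂ) * I = -1 := Complex.I_mul_I
        push_cast
        linear_combination (-(2*π*u) : ℂ) * this
      rw [hfac, I_mul_cpow (by rw [z_re]; norm_num)]
      rw [smul_eq_mul]
      have hexpeq : Complex.exp (-Complex.I * (ξ : ℂ) * ((-(2*π)*u : ℝ) : ℂ))
          = Complex.exp ((↑(-2 * π * u * -ξ) : ℝ) * Complex.I) := by
        congr 1
        push_cast
        ring
      rw [hexpeq]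
      field_simp
    rw [show (fun u : ℝ =>
          ((((-(2*π)*u : ℝ)):ℂ) + Complex.I) ^ (-s) *
            Complex.exp (-Complex.I * (ξ : ℂ) * ((-(2*π)*u : ℝ) : ℂ)))
        = (fun u : ℝ => I ^ (-s) * (Complex.Gamma s)⁻¹ *
          (Complex.exp ((↑(-2 * π * u * -ξ) : ℝ) * Complex.I) •
            (Complex.Gamma s * ((1:ℂ) + (2*π*u : ℝ) * I) ^ (-s)))) from funext hptwise] at hcv
    simp only [h𝓕] at hinv
    rw [MeasureTheory.integral_const_mul, hinv] at hcv
    have habs2 : |(-(2*π))⁻¹| = (2*π)⁻¹ := by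
      rw [abs_inv, abs_neg, abs_of_pos (by positivity : (0:ℝ) < 2*π)]
    rw [habs2] at hcv
    calc (1 / (2 * (π : ℂ))) * ∫ u : ℝ, ((u : ℂ) + Complex.I) ^ (-s) *
          Complex.exp (-Complex.I * (ξ : ℂ) * (u : ℂ))
        = ((2*π:ℝ)⁻¹ : ℝ) • ∫ u : ℝ, ((u : ℂ) + Complex.I) ^ (-s) *
          Complex.exp (-Complex.I * (ξ : ℂ) * (u : ℂ)) := by
          rw [Complex.real_smul]
          push_cast
          rw [one_div]
      _ = I ^ (-s) * (Complex.Gamma s)⁻¹ * g ξ := hcv.symm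
      _ = I ^ (-s) * g ξ / Complex.Gamma s := by
          field_simp
  refine ⟨hInt, ?_, ?_⟩
  · -- case ξ > 0
    intro ξ hξ
    have hcont : ContinuousAt g ξ := by
      have hev : g =ᶠ[nhds ξ] (fun t : ℝ => (t:ℂ) ^ (s-1) * Complex.exp (-(1:ℂ) * t)) := by
        filter_upwards [Ioi_mem_nhds hξ] with t ht
        rw [hgdef, Set.indicator_of_mem ht]
      apply ContinuousAt.congr _ hev.symm
      apply ContinuousAt.mul
      · exact continuousAt_ofReal_cpow_const ξ (s-1) (Or.inr (ne_of_gt hξ))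
      · fun_prop
    have hgval : g ξ = (ξ:ℂ) ^ (l+1) * Complex.exp (-(ξ:ℂ)) := by
      rw [hgdef, Set.indicator_of_mem (show ξ ∈ Ioi (0:ℝ) from hξ)]
      rw [show s - 1 = l + 1 by rw [hsdef]; ring, show -(1:ℂ) * (ξ:ℂ) = -(ξ:ℂ) by ring]
    rw [hmain ξ hcont, hgval]
    have hIs : I ^ s ≠ 0 := by
      rw [Ne, cpow_eq_zero_iff]
      push_neg
      intro h; exact absurd h I_ne_zero
    rw [cpow_neg, hsdef]
    rw [hsdef] at hΓ hIs
    field_simp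
  · -- case ξ < 0
    intro ξ hξ
    have hcont : ContinuousAt g ξ := by
      have hev : g =ᶠ[nhds ξ] (fun _ : ℝ => (0:ℂ)) := by
        filter_upwards [Iio_mem_nhds hξ] with t ht
        rw [hgdef, Set.indicator_of_notMem (by simp at ht ⊢; linarith)]
      apply ContinuousAt.congr continuousAt_const hev.symm
    have hgval : g ξ = 0 := by
      rw [hgdef, Set.indicator_of_notMem (by simp; linarith)]
    rw [hmain ξ hcont, hgval]
    simp
end
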